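/- arXiv:1210.6624 — 12 statements merged into one kernel-verified Lean document; each statement's English description precedes it below -/
import Mathlib

section
/- If a preorder ⊑ on the states of a Büchi automaton A is good for quotienting (i.e., quotienting by its induced equivalence preserves the language), then any preorder ⊑' contained in ⊑ is also good for quotienting. In particular, the set of GFQ preorders is downward closed under inclusion. -/
/-- A (nondeterministic) Büchi automaton over alphabet `σ` with state space `Q`. -/
structure BA (σ Q : Type) where
  I : Set Q
  F : Set Q
  δ : Q → σ → Q → Prop

namespace BA
variable {σ Q : Type}

/-- `ρ` is an infinite trace of `A` on the infinite word `w`. -/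
def InfTrace (A : BA σ Q) (w : ℕ → σ) (ρ : ℕ → Q) : Prop :=
  ∀ i, A.δ (ρ i) (w i) (ρ (i + 1))

/-- A run is fair iff it visits accepting states infinitely often. -/
def Fair (A : BA σ Q) (ρ : ℕ → Q) : Prop :=
  ∀ n, ∃ m, n ≤ m ∧ ρ m ∈ A.F

/-- The ω-language of a Büchi automaton. -/
def Lang (A : BA σ Q) : Set (ℕ → σ) :=
  {w | ∃ ρ, A.InfTrace w ρ ∧ ρ 0 ∈ A.I ∧ A.Fair ρ}

end BA

/-- The equivalence induced by a preorder: `x ≡ y` iff `r x y ∧ r y x`. -/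
def eqvOf {Q : Type} (r : Q → Q → Prop) (x y : Q) : Prop := r x y ∧ r y x

/-- The quotient automaton `A/⊑` : states are equivalence classes of the
equivalence induced by the preorder `r`, initial/accepting classes are those
containing initial/accepting states, and transitions are induced element-wise. -/
def BA.quot {σ Q : Type} (A : BA σ Q) (r : Q → Q → Prop) : BA σ (Quot (eqvOf r)) where
  I := {c | ∃ q ∈ A.I, c = Quot.mk _ q}
  F := {c | ∃ q ∈ A.F, c = Quot.mk _ q}
  δ := fun c a c' => ∃ q q', A.δ q a q' ∧ c = Quot.mk _ q ∧ c' = Quot.mk _ q'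

/-- If a preorder `r` on the states of a Büchi automaton `A` is good for quotienting
(GFQ), then any preorder `r'` contained in `r` is also GFQ: the set of GFQ preorders is
downward closed under inclusion. -/
theorem gfq_downward_closed {σ Q : Type} (A : BA σ Q) (r r' : Q → Q → Prop)
    (hrefl : Reflexive r) (htrans : Transitive r)
    (hrefl' : Reflexive r') (htrans' : Transitive r')
    (hsub : ∀ x y, r' x y → r x y)
    (hGFQ : (A.quot r).Lang = A.Lang) :
    (A.quot r').Lang = A.Lang := by
  apply Set.Subset.antisymm
  · -- (A.quot r').Lang ⊆ (A.quot r).Lang = A.Lang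
    rw [← hGFQ]
    rintro w ⟨ρ, htr, hI, hF⟩
    refine ⟨fun i => Quot.lift (Quot.mk (eqvOf r))
      (fun a b h => Quot.sound ⟨hsub _ _ h.1, hsub _ _ h.2⟩) (ρ i), ?_, ?_, ?_⟩
    · intro i
      obtain ⟨q, q', hd, hc, hc'⟩ := htr i
      exact ⟨q, q', hd, by dsimp only; rw [hc], by dsimp only; rw [hc']⟩
    · obtain ⟨q, hq, hc⟩ := hI
      exact ⟨q, hq, by dsimp only; rw [hc]⟩
    · intro n
      obtain ⟨m, hm, q, hq, hc⟩ := hF n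
      exact ⟨m, hm, q, hq, by dsimp only; rw [hc]⟩
  · -- A.Lang ⊆ (A.quot r').Lang
    rintro w ⟨ρ, htr, hI, hF⟩
    refine ⟨fun i => Quot.mk _ (ρ i), fun i => ⟨ρ i, ρ (i + 1), htr i, rfl, rfl⟩,
      ⟨ρ 0, hI, rfl⟩, fun n => ?_⟩
    obtain ⟨m, hm, hq⟩ := hF n
    exact ⟨m, hm, ρ m, hq, rfl⟩
end

section
/- Backward trace inclusion is good for quotienting: for every Büchi automaton A, quotienting by the equivalence induced by backward trace inclusion preserves the language, i.e., L(A/⊑bw) = L(A). -/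
namespace BA
variable {σ Q : Type}

/-- `ρ` is a finite trace of length `m` of `A` on (the first `m` letters of) `w`. -/
def FinTrace (A : BA σ Q) (w : ℕ → σ) (m : ℕ) (ρ : ℕ → Q) : Prop :=
  ∀ i < m, A.δ (ρ i) (w i) (ρ (i + 1))

/-- Backward trace inclusion: `p ⊑bw q` iff every initial finite trace ending in `p`
can be matched by an initial finite trace over the same word ending in `q`, matching
visits to accepting states position-wise. -/
def bwIncl (A : BA σ Q) (p q : Q) : Prop :=
  ∀ (w : ℕ → σ) (m : ℕ) (ρ : ℕ → Q),
    A.FinTrace w m ρ → ρ 0 ∈ A.I → ρ m = p →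
    ∃ ρ', A.FinTrace w m ρ' ∧ ρ' 0 ∈ A.I ∧ ρ' m = q ∧
      ∀ i ≤ m, ρ i ∈ A.F → ρ' i ∈ A.F

end BA

section Aux

variable {σ Q : Type}

theorem BA.bwIncl_refl (A : BA σ Q) (p : Q) : A.bwIncl p p := by
  intro w m ρ h h0 hm
  exact ⟨ρ, h, h0, hm, fun i _ hF => hF⟩

theorem BA.bwIncl_trans (A : BA σ Q) {p q r : Q}
    (h1 : A.bwIncl p q) (h2 : A.bwIncl q r) : A.bwIncl p r := by
  intro w m ρ h h0 hm
  obtain ⟨ρ', h', h0', hm', hF'⟩ := h1 w m ρ h h0 hm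
  obtain ⟨ρ'', h'', h0'', hm'', hF''⟩ := h2 w m ρ' h' h0' hm'
  exact ⟨ρ'', h'', h0'', hm'', fun i hi hF => hF'' i hi (hF' i hi hF)⟩

theorem eqvOf_bwIncl_equiv (A : BA σ Q) : Equivalence (eqvOf A.bwIncl) where
  refl p := ⟨A.bwIncl_refl p, A.bwIncl_refl p⟩
  symm h := ⟨h.2, h.1⟩
  trans h1 h2 := ⟨A.bwIncl_trans h1.1 h2.1, A.bwIncl_trans h2.2 h1.2⟩

theorem mk_eq_bw {A : BA σ Q} {x y : Q}
    (h : Quot.mk (eqvOf A.bwIncl) x = Quot.mk (eqvOf A.bwIncl) y) :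
    eqvOf A.bwIncl x y :=
  ((eqvOf_bwIncl_equiv A).eqvGen_iff).mp (Quot.eq.mp h)

theorem exists_ultra_fix {α R : Type} [Finite R] (U : Ultrafilter α) (f : α → R) :
    ∃ q, {a | f a = q} ∈ U := by
  by_contra h
  push_neg at h
  have hmem : (⋂ q, {a | f a = q}ᶜ) ∈ U :=
    Filter.iInter_mem.2 fun q => Ultrafilter.compl_mem_iff_notMem.2 (h q)
  obtain ⟨a, ha⟩ := U.nonempty_of_mem hmem
  simp only [Set.mem_iInter, Set.mem_compl_iff, Set.mem_setOf_eq] at ha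
  exact ha (f a) rfl

end Aux

/-- Backward trace inclusion is good for quotienting: for every (finite, forward and
backward complete) Büchi automaton `A`, quotienting by the equivalence induced by
backward trace inclusion preserves the language: `L(A/⊑bw) = L(A)`. -/

theorem bwIncl_GFQ {σ Q : Type} [Fintype Q] (A : BA σ Q)
    (hfwd : ∀ (q : Q) (a : σ), ∃ q', A.δ q a q')
    (hbwd : ∀ (q : Q) (a : σ), ∃ q', A.δ q' a q) :
    (A.quot A.bwIncl).Lang = A.Lang := by
  apply Set.Subset.antisymm
  · -- hard direction: L(A/⊑bw) ⊆ L(A)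
    rintro w ⟨ξ, hξtr, hξ0, hξfair⟩
    -- witnesses of the quotient transitions
    choose s t hδ hs ht using hξtr
    -- the goodness predicate for finite traces
    have key : ∀ n, ∃ ρ : ℕ → Q, A.FinTrace w n ρ ∧ ρ 0 ∈ A.I ∧
        Quot.mk (eqvOf A.bwIncl) (ρ n) = ξ n ∧
        ∀ i ≤ n, ξ i ∈ (A.quot A.bwIncl).F → ρ i ∈ A.F := by
      -- a "fixing" step: upgrade a trace good below n to one good up to n
      have fix : ∀ (n : ℕ) (ρ : ℕ → Q), A.FinTrace w n ρ → ρ 0 ∈ A.I →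
          Quot.mk (eqvOf A.bwIncl) (ρ n) = ξ n →
          (∀ i ≤ n, i ≠ n → ξ i ∈ (A.quot A.bwIncl).F → ρ i ∈ A.F) →
          ∃ ρ' : ℕ → Q, A.FinTrace w n ρ' ∧ ρ' 0 ∈ A.I ∧
            Quot.mk (eqvOf A.bwIncl) (ρ' n) = ξ n ∧
            ∀ i ≤ n, ξ i ∈ (A.quot A.bwIncl).F → ρ' i ∈ A.F := by
        intro n ρ htr h0 hcls hFbelow
        by_cases hFn : ξ n ∈ (A.quot A.bwIncl).F
        · obtain ⟨f, hf, hfe⟩ := hFn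
          have hP : eqvOf A.bwIncl (ρ n) f := mk_eq_bw (by rw [hcls, hfe])
          obtain ⟨ρ', htr', h0', hend', hFpres⟩ := hP.1 w n ρ htr h0 rfl
          refine ⟨ρ', htr', h0', by rw [hend', ← hfe], ?_⟩
          intro i hi hFi
          rcases eq_or_ne i n with rfl | hne
          · rw [hend']; exact hf
          · exact hFpres i hi (hFbelow i hi hne hFi)
        · refine ⟨ρ, htr, h0, hcls, ?_⟩
          intro i hi hFi
          rcases eq_or_ne i n with rfl | hne
          · exact absurd hFi hFn
          · exact hFbelow i hi hne hFi
      intro n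
      induction n with
      | zero =>
        obtain ⟨q0, hq0, hq0e⟩ := hξ0
        refine fix 0 (fun _ => q0) (fun i hi => absurd hi (Nat.not_lt_zero i)) hq0
          hq0e.symm (fun i hi hne => absurd (Nat.le_zero.mp hi) hne)
      | succ n ih =>
        obtain ⟨ρ, htr, h0, hcls, hF⟩ := ih
        have hP : eqvOf A.bwIncl (ρ n) (s n) := mk_eq_bw (by rw [hcls, hs n])
        obtain ⟨ρ', htr', h0', hend', hFpres⟩ := hP.1 w n ρ htr h0 rfl
        set ρ'' : ℕ → Q := fun i => if i ≤ n then ρ' i else t n with hρ''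
        have htr'' : A.FinTrace w (n + 1) ρ'' := by
          intro i hi
          rcases Nat.lt_succ_iff_lt_or_eq.mp hi with hlt | rfl
          · have e1 : ρ'' i = ρ' i := if_pos (le_of_lt (Nat.lt_of_lt_of_le hlt (Nat.le_refl n)))
            have e2 : ρ'' (i + 1) = ρ' (i + 1) := if_pos (Nat.succ_le_of_lt hlt)
            rw [e1, e2]; exact htr' i hlt
          · have e1 : ρ'' i = ρ' i := if_pos (Nat.le_refl i)
            have e2 : ρ'' (i + 1) = t i := if_neg (by omega)
            rw [e1, e2, hend']; exact hδ i
        have hcls'' : Quot.mk (eqvOf A.bwIncl) (ρ'' (n + 1)) = ξ (n + 1) := by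
          have : ρ'' (n + 1) = t n := if_neg (by omega)
          rw [this, ← ht n]
        refine fix (n + 1) ρ'' htr'' (by simpa [hρ''] using h0') hcls'' ?_
        intro i hi hne hFi
        have hin : i ≤ n := by omega
        have : ρ'' i = ρ' i := if_pos hin
        rw [this]
        exact hFpres i hin (hF i hin hFi)
    choose g hgtr hg0 _hgc hgF using key
    -- extract an infinite run via an ultrafilter
    set U := Filter.hyperfilter ℕ with hU
    have hcof : ∀ k : ℕ, {m | k ≤ m} ∈ U := by
      intro k
      have : ({m : ℕ | m < k})ᶜ ∈ U := (Set.finite_Iio k).compl_mem_hyperfilter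
      simpa [Set.compl_setOf, Nat.not_lt] using this
    have hval : ∀ i : ℕ, ∃ q : Q, {m | g m i = q} ∈ U :=
      fun i => exists_ultra_fix U (fun m => g m i)
    choose ρ hρ using hval
    refine ⟨ρ, ?_, ?_, ?_⟩
    · intro i
      have hmem : ({m | g m i = ρ i} ∩ {m | g m (i+1) = ρ (i+1)} ∩ {m | i + 1 ≤ m}) ∈ U :=
        Filter.inter_mem (Filter.inter_mem (hρ i) (hρ (i+1))) (hcof (i+1))
      obtain ⟨m, ⟨h1, h2⟩, h3⟩ := U.nonempty_of_mem hmem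
      have := hgtr m i (by exact Nat.lt_of_lt_of_le (Nat.lt_succ_self i) h3)
      rwa [h1, h2] at this
    · obtain ⟨m, hm⟩ := U.nonempty_of_mem (hρ 0)
      have := hg0 m
      rwa [hm] at this
    · intro n
      obtain ⟨k, hnk, hFk⟩ := hξfair n
      have hmem : ({m | g m k = ρ k} ∩ {m | k ≤ m}) ∈ U :=
        Filter.inter_mem (hρ k) (hcof k)
      obtain ⟨m, h1, h2⟩ := U.nonempty_of_mem hmem
      have := hgF m k h2 hFk
      rw [h1] at this
      exact ⟨k, hnk, this⟩
  · -- easy direction: L(A) ⊆ L(A/⊑bw)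
    rintro w ⟨ρ, htr, h0, hfair⟩
    refine ⟨fun i => Quot.mk _ (ρ i), ?_, ⟨ρ 0, h0, rfl⟩, ?_⟩
    · exact fun i => ⟨ρ i, ρ (i+1), htr i, rfl, rfl⟩
    · intro n
      obtain ⟨m, hm, hF⟩ := hfair n
      exact ⟨m, hm, ρ m, hF, rfl⟩
end

section
/- Backward trace inclusion is good for inclusion: given Büchi automata A and B, if every accepting state of A is backward-trace-included in some accepting state of B (with the relation computed on the disjoint union, matching initial states of A to initial states of B), then L(A) ⊆ L(B). -/
/-- Backward trace inclusion between states of two automata `A` and `B` (as computed on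
their disjoint union, matching initial states of `A` to initial states of `B`):
every initial finite trace of `A` ending in `p` is matched by an initial finite trace
of `B` over the same word ending in `q`, preserving accepting positions. -/
def bwInclAB {σ Q₁ Q₂ : Type} (A : BA σ Q₁) (B : BA σ Q₂) (p : Q₁) (q : Q₂) : Prop :=
  ∀ (w : ℕ → σ) (m : ℕ) (ρ : ℕ → Q₁),
    A.FinTrace w m ρ → ρ 0 ∈ A.I → ρ m = p →
    ∃ ρ', B.FinTrace w m ρ' ∧ ρ' 0 ∈ B.I ∧ ρ' m = q ∧
      ∀ i ≤ m, ρ i ∈ A.F → ρ' i ∈ B.F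

/-- Backward trace inclusion is good for inclusion: if every accepting state of `A` is
backward-trace-included in some accepting state of `B`, then `L(A) ⊆ L(B)`
(both automata finitely branching, here: finite-state). -/
theorem bwIncl_GFI {σ Q₁ Q₂ : Type} [Fintype Q₁] [Fintype Q₂]
    (A : BA σ Q₁) (B : BA σ Q₂)
    (h : ∀ p ∈ A.F, ∃ q ∈ B.F, bwInclAB A B p q) :
    A.Lang ⊆ B.Lang := by
  intro w hw
  obtain ⟨ρ, htr, hI, hfair⟩ := hw
  choose m hm hmF using hfair
  have hstep : ∀ k, ∃ g : ℕ → Q₂, B.FinTrace w (m k) g ∧ g 0 ∈ B.I ∧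
      ∀ i ≤ m k, ρ i ∈ A.F → g i ∈ B.F := by
    intro k
    obtain ⟨q, _, hq⟩ := h (ρ (m k)) (hmF k)
    obtain ⟨g, h1, h2, _, h4⟩ := hq w (m k) ρ (fun i _ => htr i) hI rfl
    exact ⟨g, h1, h2, h4⟩
  choose g hg1 hg2 hg3 using hstep
  set U : Ultrafilter ℕ := Filter.hyperfilter ℕ with hU
  have hcof : ∀ n, {k | n ≤ m k} ∈ U := by
    intro n
    have h1 : {k : ℕ | k < n}.Finite := Set.finite_Iio n
    have h2 : {k : ℕ | k < n}ᶜ ∈ Filter.cofinite := h1.compl_mem_cofinite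
    have h3 : {k : ℕ | k < n}ᶜ ∈ (U : Filter ℕ) :=
      Filter.hyperfilter_le_cofinite h2
    refine Filter.mem_of_superset h3 ?_
    intro k hk
    simp only [Set.mem_compl_iff, Set.mem_setOf_eq, not_lt] at hk
    exact le_trans hk (hm k)
  have hex : ∀ n, ∃ q : Q₂, {k | g k n = q} ∈ U := by
    intro n
    by_contra hc
    push_neg at hc
    have hall : ∀ q : Q₂, {k | g k n = q}ᶜ ∈ U :=
      fun q => Ultrafilter.compl_mem_iff_notMem.2 (hc q)
    have hint : (⋂ q : Q₂, {k | g k n = q}ᶜ) ∈ (U : Filter ℕ) :=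
      Filter.iInter_mem.2 hall
    obtain ⟨k, hk⟩ := Filter.nonempty_of_mem hint
    exact (Set.mem_iInter.1 hk (g k n)) rfl
  choose ρ' hρ' using hex
  refine ⟨ρ', ?_, ?_, ?_⟩
  · intro n
    have hmem : ({k | g k n = ρ' n} ∩ {k | g k (n+1) = ρ' (n+1)} ∩ {k | n+1 ≤ m k})
        ∈ (U : Filter ℕ) :=
      Filter.inter_mem (Filter.inter_mem (hρ' n) (hρ' (n+1))) (hcof (n+1))
    obtain ⟨k, ⟨hk1, hk2⟩, hk3⟩ := Filter.nonempty_of_mem hmem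
    have := hg1 k n (lt_of_lt_of_le (Nat.lt_succ_self n) hk3)
    rwa [hk1, hk2] at this
  · obtain ⟨k, hk⟩ := Filter.nonempty_of_mem (hρ' 0)
    have := hg2 k
    rwa [hk] at this
  · intro n
    refine ⟨m n, hm n, ?_⟩
    have hmem : ({k | g k (m n) = ρ' (m n)} ∩ {k | m n ≤ m k}) ∈ (U : Filter ℕ) :=
      Filter.inter_mem (hρ' (m n)) (hcof (m n))
    obtain ⟨k, hk1, hk2⟩ := Filter.nonempty_of_mem hmem
    have := hg3 k (m n) hk2 (hmF n)
    rwa [hk1] at this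
end

section
/- Pruning with (id, R) for R a direct-trace-inclusion-refining strict order is good for pruning: let A be a finitely branching Büchi automaton and R an asymmetric transitive relation on states with R ⊆ ⊑di (direct trace inclusion). Removing every transition (p,σ,r) for which there exists a transition (p,σ,r') with r R r' yields an automaton with the same language as A. -/
namespace BA
variable {σ Q : Type}

/-- Direct trace inclusion: `p ⊑di q` iff every infinite trace from `p` is matched by an
infinite trace from `q` on the same word, preserving accepting positions. -/
def diIncl (A : BA σ Q) (p q : Q) : Prop :=
  ∀ (w : ℕ → σ) (ρ : ℕ → Q),
    A.InfTrace w ρ → ρ 0 = p →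
    ∃ ρ', A.InfTrace w ρ' ∧ ρ' 0 = q ∧ ∀ i, ρ i ∈ A.F → ρ' i ∈ A.F

end BA

/-- Pruning with `P(id, R)`: simultaneously remove every transition `(p,σ,r)` such that
there exists a transition `(p,σ,r')` with `R r r'`. -/
def pruneFw {σ Q : Type} (A : BA σ Q) (R : Q → Q → Prop) : BA σ Q where
  I := A.I
  F := A.F
  δ := fun p a r => A.δ p a r ∧ ¬ ∃ r', A.δ p a r' ∧ R r r'

/-- In a finite type, above any `D`-element there is an `R`-maximal `D`-element. -/
lemma exists_R_max {Q : Type} [Fintype Q] (R : Q → Q → Prop)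
    (hasym : ∀ x y, R x y → ¬ R y x) (htrans : Transitive R) (D : Q → Prop) :
    ∀ x, D x → ∃ r, D r ∧ (x = r ∨ R x r) ∧ ∀ r', D r' → ¬ R r r' := by
  have key : ∀ n x, Set.ncard {y | R x y} = n → D x →
      ∃ r, D r ∧ (x = r ∨ R x r) ∧ ∀ r', D r' → ¬ R r r' := by
    intro n
    induction n using Nat.strong_induction_on with
    | _ n ih =>
      intro x hn hx
      by_cases h : ∃ r', D r' ∧ R x r'
      · obtain ⟨r', hr'D, hr'R⟩ := h
        have hss : {y | R r' y} ⊂ {y | R x y} := by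
          constructor
          · exact fun y hy => htrans hr'R hy
          · intro h2
            exact hasym r' r' (h2 hr'R) (h2 hr'R)
        have hlt : Set.ncard {y | R r' y} < n := by
          rw [← hn]
          exact Set.ncard_lt_ncard hss (Set.toFinite _)
        obtain ⟨r, hrD, hor, hmax⟩ := ih _ hlt r' rfl hr'D
        refine ⟨r, hrD, Or.inr ?_, hmax⟩
        rcases hor with rfl | hh
        · exact hr'R
        · exact htrans hr'R hh
      · exact ⟨x, hx, Or.inl rfl, fun r' hD hR => h ⟨r', hD, hR⟩⟩
  exact fun x hx => key _ x rfl hx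

/-- Invariant for the iterative repair construction: `ρ` is a trace of `A` on `w`, starts at
the same state as `ρ0`, dominates the accepting positions of `ρ0`, and its first `k`
transitions survive pruning. -/
def GoodAux {σ Q : Type} (A : BA σ Q) (R : Q → Q → Prop) (w : ℕ → σ) (ρ0 : ℕ → Q)
    (k : ℕ) (ρ : ℕ → Q) : Prop :=
  A.InfTrace w ρ ∧ ρ 0 = ρ0 0 ∧ (∀ j, ρ0 j ∈ A.F → ρ j ∈ A.F) ∧
    ∀ j < k, ¬ ∃ r', A.δ (ρ j) (w j) r' ∧ R (ρ (j + 1)) r'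

/-- One repair step: a `GoodAux k` trace can be turned into a `GoodAux (k+1)` trace
agreeing with it on positions `≤ k`. -/
lemma step_aux {σ Q : Type} [Fintype Q] (A : BA σ Q) (R : Q → Q → Prop)
    (hasym : ∀ x y, R x y → ¬ R y x) (htrans : Transitive R)
    (hsub : ∀ x y, R x y → A.diIncl x y) (w : ℕ → σ) (ρ0 : ℕ → Q)
    (k : ℕ) (ρ : ℕ → Q) (hg : GoodAux A R w ρ0 k ρ) :
    ∃ ρ', GoodAux A R w ρ0 (k + 1) ρ' ∧ ∀ j ≤ k, ρ' j = ρ j := by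
  classical
  obtain ⟨htr, h0, hFp, hok⟩ := hg
  by_cases hbad : ∃ j, ∃ r', A.δ (ρ j) (w j) r' ∧ R (ρ (j + 1)) r'
  · set i := Nat.find hbad with hi
    obtain ⟨r0, hδr0, hRr0⟩ := Nat.find_spec hbad
    have hleast : ∀ j < i, ¬ ∃ r', A.δ (ρ j) (w j) r' ∧ R (ρ (j + 1)) r' :=
      fun j hj => Nat.find_min hbad hj
    have hik : k ≤ i := by
      by_contra hc
      push_neg at hc
      exact hok i hc ⟨r0, hδr0, hRr0⟩
    -- pick an R-maximal successor above ρ (i+1)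
    obtain ⟨r, hrδ, hor, hmax⟩ :=
      exists_R_max R hasym htrans (fun q => A.δ (ρ i) (w i) q) (ρ (i + 1)) (htr i)
    have hRr : R (ρ (i + 1)) r := by
      rcases hor with heq | h
      · exact absurd hRr0 (heq ▸ hmax r0 hδr0)
      · exact h
    -- match the suffix trace from ρ (i+1) by one from r
    have hsuf : A.InfTrace (fun j => w (i + 1 + j)) (fun j => ρ (i + 1 + j)) :=
      fun j => htr (i + 1 + j)
    obtain ⟨ρ', htr', h0', hFpres⟩ := hsub _ _ hRr _ _ hsuf rfl
    refine ⟨fun j => if j ≤ i then ρ j else ρ' (j - (i + 1)), ?_, ?_⟩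
    · refine ⟨?_, ?_, ?_, ?_⟩
      · -- trace property
        intro j
        rcases lt_trichotomy j i with hj | hj | hj
        · simp only [if_pos hj.le, if_pos (Nat.succ_le_of_lt hj)]
          exact htr j
        · subst hj
          simp only [if_pos le_rfl, if_neg (Nat.not_succ_le_self i), Nat.sub_self]
          rw [h0']
          exact hrδ
        · have e1 : i + 1 + (j - (i + 1)) = j := by omega
          have e2 : j + 1 - (i + 1) = j - (i + 1) + 1 := by omega
          simp only [if_neg (by omega : ¬ j ≤ i), if_neg (by omega : ¬ j + 1 ≤ i), e2]
          simpa only [e1] using htr' (j - (i + 1))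
      · -- initial state
        simp only [if_pos (Nat.zero_le i)]
        exact h0
      · -- fairness domination
        intro j hj
        by_cases hji : j ≤ i
        · simpa only [if_pos hji] using hFp j hj
        · have e1 : i + 1 + (j - (i + 1)) = j := by omega
          simp only [if_neg hji]
          refine hFpres (j - (i + 1)) ?_
          show ρ (i + 1 + (j - (i + 1))) ∈ A.F
          rw [e1]
          exact hFp j hj
      · -- first k+1 transitions survive pruning
        intro j hj
        have hji : j ≤ i := by omega
        rcases lt_or_eq_of_le hji with hji' | hji'
        · simp only [if_pos hji, if_pos (Nat.succ_le_of_lt hji')]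
          exact hleast j hji'
        · subst hji'
          simp only [if_pos le_rfl, if_neg (Nat.not_succ_le_self i), Nat.sub_self]
          rintro ⟨r', hδ', hR'⟩
          rw [h0'] at hR'
          exact hmax r' hδ' hR'
    · intro j hj
      simp only [if_pos (le_trans hj hik)]
  · push_neg at hbad
    exact ⟨ρ, ⟨htr, h0, hFp, fun j _ => by
      rintro ⟨r', h1, h2⟩; exact hbad j r' h1 h2⟩, fun j _ => rfl⟩
/-- Pruning with `P(id, R)` for `R` an asymmetric transitive relation contained in direct
trace inclusion is good for pruning: the pruned automaton has the same language as `A`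
(`A` finite/finitely branching and complete). -/
theorem prune_id_diIncl_GFP {σ Q : Type} [Fintype Q] (A : BA σ Q)
    (hcomplete : ∀ (q : Q) (a : σ), ∃ q', A.δ q a q')
    (R : Q → Q → Prop)
    (hasym : ∀ x y, R x y → ¬ R y x)
    (htrans : Transitive R)
    (hsub : ∀ x y, R x y → A.diIncl x y) :
    (pruneFw A R).Lang = A.Lang := by
  classical
  apply Set.eq_of_subset_of_subset
  · rintro w ⟨ρ, htr, hI, hF⟩
    exact ⟨ρ, fun i => (htr i).1, hI, hF⟩
  · rintro w ⟨ρ0, htr0, hI0, hF0⟩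
    have good0 : GoodAux A R w ρ0 0 ρ0 :=
      ⟨htr0, rfl, fun _ h => h, fun j hj => absurd hj (Nat.not_lt_zero j)⟩
    choose step hGstep hagree using
      fun k ρ hg => step_aux A R hasym htrans hsub w ρ0 k ρ hg
    let seq : ∀ _ : ℕ, {ρ : ℕ → Q // GoodAux A R w ρ0 _ ρ} := fun k =>
      Nat.rec (motive := fun k => {ρ : ℕ → Q // GoodAux A R w ρ0 k ρ})
        ⟨ρ0, good0⟩ (fun k p => ⟨step k p.1 p.2, hGstep k p.1 p.2⟩) k
    have hstep_eq : ∀ k, (seq (k + 1)).1 = step k (seq k).1 (seq k).2 := fun k => rfl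
    have hmono : ∀ m k j, k ≤ m → j ≤ k → (seq m).1 j = (seq k).1 j := by
      intro m
      induction m with
      | zero =>
        intro k j hk hj
        obtain rfl : k = 0 := Nat.le_zero.mp hk
        rfl
      | succ m ih =>
        intro k j hk hj
        by_cases hkm : k = m + 1
        · subst hkm; rfl
        · have hk' : k ≤ m := by omega
          have h1 : (seq (m + 1)).1 j = (seq m).1 j := by
            rw [hstep_eq m]
            exact hagree m (seq m).1 (seq m).2 j (le_trans hj hk')
          rw [h1]
          exact ih k j hk' hj
    refine ⟨fun j => (seq j).1 j, ?_, ?_, ?_⟩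
    · intro j
      obtain ⟨htrj, _, _, hokj⟩ := (seq (j + 1)).2
      have e1 : (seq j).1 j = (seq (j + 1)).1 j := (hmono (j + 1) j j (by omega) le_rfl).symm
      have e2 : (seq (j + 1)).1 (j + 1) = (seq (j + 1)).1 (j + 1) := rfl
      show (pruneFw A R).δ ((seq j).1 j) (w j) ((seq (j + 1)).1 (j + 1))
      refine ⟨?_, ?_⟩
      · rw [e1]; exact htrj j
      · rw [e1]; exact hokj j (by omega)
    · show (seq 0).1 0 ∈ A.I
      exact hI0
    · intro n
      obtain ⟨m, hnm, hmF⟩ := hF0 n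
      exact ⟨m, hnm, ((seq m).2).2.2.1 m hmF⟩
end

section
/- Pruning with (R, id) for R a backward-trace-inclusion-refining strict order is good for pruning: let A be a Büchi automaton and R an asymmetric transitive relation on states with R ⊆ ⊑bw (backward trace inclusion). Removing every transition (p,σ,r) for which there exists a transition (p',σ,r) with p R p' yields an automaton with the same language as A. -/
/-- Pruning with `P(R, id)`: simultaneously remove every transition `(p,σ,r)` such that
there exists a transition `(p',σ,r)` with `R p p'`. -/
def pruneBw {σ Q : Type} (A : BA σ Q) (R : Q → Q → Prop) : BA σ Q where
  I := A.I
  F := A.F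
  δ := fun p a r => A.δ p a r ∧ ¬ ∃ p', A.δ p' a r ∧ R p p'

/-- Every initial finite trace of `A` can be replaced by an initial finite trace of the
pruned automaton with the same endpoint and at least the same accepting positions. -/
private lemma fixTrace {σ Q : Type} [Fintype Q] (A : BA σ Q) (R : Q → Q → Prop)
    (hasym : ∀ x y, R x y → ¬ R y x) (htrans : Transitive R)
    (hsub : ∀ x y, R x y → A.bwIncl x y) (w : ℕ → σ) :
    ∀ m (ρ : ℕ → Q), A.FinTrace w m ρ → ρ 0 ∈ A.I →
      ∃ ρ', (pruneBw A R).FinTrace w m ρ' ∧ ρ' 0 ∈ A.I ∧ ρ' m = ρ m ∧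
        ∀ i ≤ m, ρ i ∈ A.F → ρ' i ∈ A.F := by
  have hwf : WellFounded (fun a b => R b a) := by
    haveI : IsTrans Q (fun a b => R b a) := ⟨fun a b c h1 h2 => htrans h2 h1⟩
    haveI : IsIrrefl Q (fun a b => R b a) := ⟨fun a h => hasym a a h h⟩
    exact Finite.wellFounded_of_trans_of_irrefl _
  intro m
  induction m with
  | zero =>
    intro ρ h hI
    exact ⟨ρ, fun i hi => absurd hi (Nat.not_lt_zero i), hI, rfl, fun i _ hF => hF⟩
  | succ m IH =>
    have inner : ∀ q (ρ : ℕ → Q), A.FinTrace w (m+1) ρ → ρ 0 ∈ A.I → ρ m = q →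
        ∃ ρ', (pruneBw A R).FinTrace w (m+1) ρ' ∧ ρ' 0 ∈ A.I ∧ ρ' (m+1) = ρ (m+1) ∧
          ∀ i ≤ m+1, ρ i ∈ A.F → ρ' i ∈ A.F := by
      intro q
      refine hwf.induction (C := fun q => ∀ (ρ : ℕ → Q), A.FinTrace w (m+1) ρ → ρ 0 ∈ A.I → ρ m = q →
        ∃ ρ', (pruneBw A R).FinTrace w (m+1) ρ' ∧ ρ' 0 ∈ A.I ∧ ρ' (m+1) = ρ (m+1) ∧
          ∀ i ≤ m+1, ρ i ∈ A.F → ρ' i ∈ A.F) q ?_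
      intro q IH2 ρ htr hI hq
      by_cases hp : ∃ p', A.δ p' (w m) (ρ (m+1)) ∧ R (ρ m) p'
      · obtain ⟨q', hδ', hR⟩ := hp
        obtain ⟨τ, hτtr, hτI, hτm, hτF⟩ :=
          hsub (ρ m) q' hR w m ρ (fun i hi => htr i (Nat.lt_succ_of_lt hi)) hI rfl
        set ρ₂ : ℕ → Q := fun i => if i ≤ m then τ i else ρ i with hρ₂
        have h₂tr : A.FinTrace w (m+1) ρ₂ := by
          intro i hi
          rcases Nat.lt_succ_iff_lt_or_eq.mp hi with h | h
          · have e1 : ρ₂ i = τ i := if_pos (le_of_lt h)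
            have e2 : ρ₂ (i+1) = τ (i+1) := if_pos h
            rw [e1, e2]; exact hτtr i h
          · subst h
            have e1 : ρ₂ i = τ i := if_pos le_rfl
            have e2 : ρ₂ (i+1) = ρ (i+1) := if_neg (by omega)
            rw [e1, e2, hτm]; exact hδ'
        have h₂I : ρ₂ 0 ∈ A.I := by
          have : ρ₂ 0 = τ 0 := if_pos (Nat.zero_le m)
          rw [this]; exact hτI
        have h₂m : ρ₂ m = q' := by
          have : ρ₂ m = τ m := if_pos le_rfl
          rw [this, hτm]
        obtain ⟨ρ', h1, h2, h3, h4⟩ := IH2 q' (hq ▸ hR) ρ₂ h₂tr h₂I h₂m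
        refine ⟨ρ', h1, h2, ?_, ?_⟩
        · rw [h3]; exact if_neg (by omega)
        · intro i hi hF
          apply h4 i hi
          by_cases h : i ≤ m
          · have : ρ₂ i = τ i := if_pos h
            rw [this]; exact hτF i h hF
          · have : ρ₂ i = ρ i := if_neg h
            rw [this]; exact hF
      · obtain ⟨ρ'', h1, h2, h3, h4⟩ := IH ρ (fun i hi => htr i (Nat.lt_succ_of_lt hi)) hI
        refine ⟨fun i => if i ≤ m then ρ'' i else ρ i, ?_, ?_, ?_, ?_⟩
        · intro i hi
          rcases Nat.lt_succ_iff_lt_or_eq.mp hi with h | h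
          · simp only [if_pos (le_of_lt h), if_pos (Nat.succ_le_of_lt h)]
            exact h1 i h
          · subst h
            simp only [if_pos le_rfl, if_neg (show ¬ i+1 ≤ i by omega)]
            rw [h3]
            exact ⟨htr i (Nat.lt_succ_self i), hp⟩
        · simp only [if_pos (Nat.zero_le m)]; exact h2
        · simp only [if_neg (show ¬ m+1 ≤ m by omega)]
        · intro i hi hF
          by_cases h : i ≤ m
          · simp only [if_pos h]; exact h4 i h hF
          · simp only [if_neg h]; exact hF
    intro ρ htr hI
    exact inner (ρ m) ρ htr hI rfl

private lemma exists_infinite_fiber_subset {Q : Type} [Fintype Q] {s : Set ℕ}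
    (hs : s.Infinite) (g : ℕ → Q) :
    ∃ p : Q × Set ℕ, p.2 ⊆ s ∧ p.2.Infinite ∧ ∀ m ∈ p.2, g m = p.1 := by
  have h : ∃ q : Q, {m | m ∈ s ∧ g m = q}.Infinite := by
    by_contra h
    push_neg at h
    apply hs
    have hsub : s ⊆ ⋃ q : Q, {m | m ∈ s ∧ g m = q} :=
      fun m hm => Set.mem_iUnion.2 ⟨g m, hm, rfl⟩
    exact Set.Finite.subset (Set.finite_iUnion h) hsub
  obtain ⟨q, hq⟩ := h
  exact ⟨(q, {m | m ∈ s ∧ g m = q}), fun m hm => hm.1, hq, fun m hm => hm.2⟩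

private noncomputable def buildP {Q : Type} [Fintype Q] (τ : ℕ → ℕ → Q) :
    (n : ℕ) → {p : Q × Set ℕ // p.2.Infinite ∧ (∀ m ∈ p.2, τ m n = p.1)}
  | 0 =>
    let h := exists_infinite_fiber_subset (Q := Q) Set.infinite_univ (fun m => τ m 0)
    ⟨h.choose, h.choose_spec.2.1, h.choose_spec.2.2⟩
  | (n+1) =>
    let h := exists_infinite_fiber_subset (buildP τ n).2.1 (fun m => τ m (n+1))
    ⟨h.choose, h.choose_spec.2.1, h.choose_spec.2.2⟩

private lemma buildP_succ_subset {Q : Type} [Fintype Q] (τ : ℕ → ℕ → Q) (n : ℕ) :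
    (buildP τ (n+1)).1.2 ⊆ (buildP τ n).1.2 := by
  show (exists_infinite_fiber_subset (buildP τ n).2.1 (fun m => τ m (n+1))).choose.2 ⊆ _
  exact (exists_infinite_fiber_subset (buildP τ n).2.1 (fun m => τ m (n+1))).choose_spec.1

/-- Pruning with `P(R, id)` for `R` an asymmetric transitive relation contained in
backward trace inclusion is good for pruning: the pruned automaton has the same
language as `A` (a finite-state Büchi automaton). -/
theorem prune_bwIncl_id_GFP {σ Q : Type} [Fintype Q] (A : BA σ Q)
    (R : Q → Q → Prop)
    (hasym : ∀ x y, R x y → ¬ R y x)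
    (htrans : Transitive R)
    (hsub : ∀ x y, R x y → A.bwIncl x y) :
    (pruneBw A R).Lang = A.Lang := by
  apply Set.Subset.antisymm
  · rintro w ⟨ρ, htr, hI, hF⟩
    exact ⟨ρ, fun i => (htr i).1, hI, hF⟩
  · rintro w ⟨ρ, htr, hI, hF⟩
    have hfix := fun m => fixTrace A R hasym htrans hsub w m ρ (fun i _ => htr i) hI
    choose τ hτ1 hτ2 hτ3 hτ4 using hfix
    set S : ℕ → Set ℕ := fun n => (buildP τ n).1.2 with hS
    set π : ℕ → Q := fun n => (buildP τ n).1.1 with hπ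
    have hSinf : ∀ n, (S n).Infinite := fun n => (buildP τ n).2.1
    have hSπ : ∀ n m, m ∈ S n → τ m n = π n := fun n m hm => (buildP τ n).2.2 m hm
    have hstep : ∀ n, S (n+1) ⊆ S n := fun n => buildP_succ_subset τ n
    have hmono : ∀ n k, n ≤ k → S k ⊆ S n := by
      intro n k h
      induction k with
      | zero =>
        have : n = 0 := Nat.le_zero.mp h
        subst this; exact subset_rfl
      | succ k ih =>
        rcases Nat.lt_or_ge n (k+1) with h' | h'
        · exact fun x hx => ih (Nat.lt_succ_iff.mp h') (hstep k hx)
        · have : n = k+1 := le_antisymm h h'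
          subst this; exact subset_rfl
    refine ⟨π, ?_, ?_, ?_⟩
    · intro i
      obtain ⟨m, hm, hmi⟩ := (hSinf (i+1)).exists_gt i
      have e1 : τ m i = π i := hSπ i m (hmono i (i+1) (Nat.le_succ i) hm)
      have e2 : τ m (i+1) = π (i+1) := hSπ (i+1) m hm
      rw [← e1, ← e2]
      exact hτ1 m i (by omega)
    · obtain ⟨m, hm⟩ := (hSinf 0).nonempty
      rw [← hSπ 0 m hm]
      exact hτ2 m
    · intro n
      obtain ⟨j, hj, hjF⟩ := hF n
      obtain ⟨m, hm, hmj⟩ := (hSinf j).exists_gt j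
      refine ⟨j, hj, ?_⟩
      rw [← hSπ j m hm]
      exact hτ4 m j (le_of_lt hmj) hjF
end

section
/- Pruning with (backward trace inclusion, strict direct simulation) is good for pruning: for any Büchi automaton A, removing (in parallel) every transition (p,σ,r) such that there exists a transition (p',σ,r') with p ⊑bw p' and r strictly direct-simulated by r' preserves the language of A. -/
namespace BA
variable {σ Q : Type}

/-- `S` is a direct simulation. -/
def IsDiSim (A : BA σ Q) (S : Q → Q → Prop) : Prop :=
  ∀ p q, S p q → (p ∈ A.F → q ∈ A.F) ∧
    ∀ a p', A.δ p a p' → ∃ q', A.δ q a q' ∧ S p' q'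

/-- Direct simulation: the largest direct simulation relation. -/
def diSim (A : BA σ Q) (p q : Q) : Prop :=
  ∃ S, IsDiSim A S ∧ S p q

/-- Strict direct simulation `⊑^di ∖ (⊑^di)⁻¹`. -/
def diSimStrict (A : BA σ Q) (p q : Q) : Prop :=
  diSim A p q ∧ ¬ diSim A q p

end BA

namespace BA
variable {σ Q : Type}
variable (A : BA σ Q)

-- auxiliary
variable (A : BA σ Q)

lemma diSim_isDiSim : IsDiSim A (diSim A) := by
  intro p q ⟨S, hS, hpq⟩
  refine ⟨fun h => ((hS p q hpq).1 h), fun a p' hp' => ?_⟩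
  obtain ⟨q', hq', hS'⟩ := (hS p q hpq).2 a p' hp'
  exact ⟨q', hq', S, hS, hS'⟩

lemma diSim_F {p q : Q} (h : diSim A p q) : p ∈ A.F → q ∈ A.F :=
  (A.diSim_isDiSim p q h).1

lemma diSim_step {p q p' : Q} {a : σ} (h : diSim A p q) (hp : A.δ p a p') :
    ∃ q', A.δ q a q' ∧ diSim A p' q' :=
  (A.diSim_isDiSim p q h).2 a p' hp

lemma diSim_trans {p q r : Q} (h1 : diSim A p q) (h2 : diSim A q r) : diSim A p r := by
  refine ⟨fun x z => ∃ y, diSim A x y ∧ diSim A y z, ?_, q, h1, h2⟩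
  rintro x z ⟨y, hxy, hyz⟩
  refine ⟨fun h => A.diSim_F hyz (A.diSim_F hxy h), fun a x' hx' => ?_⟩
  obtain ⟨y', hy', hxy'⟩ := A.diSim_step hxy hx'
  obtain ⟨z', hz', hyz'⟩ := A.diSim_step hyz hy'
  exact ⟨z', hz', y', hxy', hyz'⟩

noncomputable def rank (q : Q) : ℕ := Set.ncard {x | diSimStrict A x q}

lemma rank_le_rank [Fintype Q] {p q : Q} (h : diSim A p q) : A.rank p ≤ A.rank q := by
  apply Set.ncard_le_ncard _ (Set.toFinite _)
  rintro x ⟨hxp, hpx⟩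
  exact ⟨A.diSim_trans hxp h, fun hqx => hpx (A.diSim_trans h hqx)⟩

lemma rank_lt_rank [Fintype Q] {p q : Q} (h : diSimStrict A p q) : A.rank p < A.rank q := by
  apply Set.ncard_lt_ncard _ (Set.toFinite _)
  constructor
  · rintro x ⟨hxp, hpx⟩
    exact ⟨A.diSim_trans hxp h.1, fun hqx => hpx (A.diSim_trans h.1 hqx)⟩
  · intro hsub
    have hp : p ∈ {x | diSimStrict A x q} := h
    have := hsub hp
    exact this.2 this.1

lemma rank_le_card [Fintype Q] (q : Q) : A.rank q ≤ Fintype.card Q := by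
  have := Set.ncard_le_ncard (Set.subset_univ {x | diSimStrict A x q}) (Set.toFinite _)
  simpa [rank, Set.ncard_univ] using this


lemma exists_sim_suffix (w : ℕ → σ) (ρ : ℕ → Q) (h : A.InfTrace w ρ) (i : ℕ) (q : Q)
    (hq : diSim A (ρ i) q) :
    ∃ s : ℕ → Q, s i = q ∧ (∀ j, i ≤ j → A.δ (s j) (w j) (s (j + 1))) ∧
      ∀ j, i ≤ j → diSim A (ρ j) (s j) := by
  have step : ∀ (k : ℕ) (x : Q), diSim A (ρ (i + k)) x →
      ∃ q', A.δ x (w (i + k)) q' ∧ diSim A (ρ (i + k + 1)) q' :=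
    fun k x hx => A.diSim_step hx (h (i + k))
  choose nxt hδ hsim using step
  let f : ∀ k : ℕ, {x : Q // diSim A (ρ (i + k)) x} := fun k =>
    Nat.rec ⟨q, hq⟩ (fun k ih => ⟨nxt k ih.1 ih.2, hsim k ih.1 ih.2⟩) k
  set g : ℕ → Q := fun k => (f k).1 with hg
  have hg0 : g 0 = q := rfl
  have hgδ : ∀ k, A.δ (g k) (w (i + k)) (g (k + 1)) := fun k => hδ k (f k).1 (f k).2
  have hgsim : ∀ k, diSim A (ρ (i + k)) (g k) := fun k => (f k).2
  refine ⟨fun j => g (j - i), by simp only [Nat.sub_self, hg0], ?_, ?_⟩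
  · intro j hj
    obtain ⟨k, rfl⟩ : ∃ k, j = i + k := ⟨j - i, by omega⟩
    have h1 : i + k - i = k := by omega
    have h2 : i + k + 1 - i = k + 1 := by omega
    simp only [h1, h2]
    exact hgδ k
  · intro j hj
    obtain ⟨k, rfl⟩ : ∃ k, j = i + k := ⟨j - i, by omega⟩
    have h1 : i + k - i = k := by omega
    simp only [h1]
    exact hgsim k

lemma replace (w : ℕ → σ) (ρ : ℕ → Q) (hρ : A.InfTrace w ρ) (h0 : ρ 0 ∈ A.I) (i : ℕ)
    (hpr : ∃ p' r', A.δ p' (w i) r' ∧ A.bwIncl (ρ i) p' ∧ A.diSimStrict (ρ (i + 1)) r') :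
    ∃ ρ', A.InfTrace w ρ' ∧ ρ' 0 ∈ A.I ∧ (∀ j, ρ j ∈ A.F → ρ' j ∈ A.F) ∧
      A.diSimStrict (ρ (i + 1)) (ρ' (i + 1)) ∧ ∀ j, i + 1 ≤ j → diSim A (ρ j) (ρ' j) := by
  obtain ⟨p', r', hδ', hbw, hstr⟩ := hpr
  obtain ⟨π, hπtr, hπ0, hπi, hπF⟩ := hbw w i ρ (fun j hj => hρ j) h0 rfl
  obtain ⟨s, hsi, hstr', hsim⟩ := A.exists_sim_suffix w ρ hρ (i + 1) r' hstr.1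
  refine ⟨fun j => if j ≤ i then π j else s j, ?_, ?_, ?_, ?_, ?_⟩
  · intro j
    rcases lt_trichotomy j i with hj | rfl | hj
    · simp only [if_pos (le_of_lt hj), if_pos (by omega : j + 1 ≤ i)]
      exact hπtr j hj
    · simp only [if_pos le_rfl, if_neg (by omega : ¬ j + 1 ≤ j), hπi, hsi]
      exact hδ'
    · simp only [if_neg (by omega : ¬ j ≤ i), if_neg (by omega : ¬ j + 1 ≤ i)]
      exact hstr' j (by omega)
  · simpa using hπ0
  · intro j hj
    by_cases h : j ≤ i
    · simp only [if_pos h]; exact hπF j h hj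
    · simp only [if_neg h]; exact A.diSim_F (hsim j (by omega)) hj
  · simp only [if_neg (by omega : ¬ i + 1 ≤ i), hsi]; exact hstr
  · intro j hj
    simp only [if_neg (by omega : ¬ j ≤ i)]
    exact hsim j hj

lemma geom_aux (N : ℕ) : ∀ i, ∑ j ∈ Finset.range i, N * (N + 1) ^ j = (N + 1) ^ i - 1 := by
  intro i
  induction i with
  | zero => simp
  | succ i ih =>
    rw [Finset.sum_range_succ, ih, pow_succ]
    have hP : 1 ≤ (N + 1) ^ i := Nat.one_le_pow _ _ (by omega)
    set P := (N + 1) ^ i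
    have : P * (N + 1) = P + N * P := by ring
    rw [this]
    omega

/-- weighted measure of the first `n` transitions of a run -/
noncomputable def T [Fintype Q] (n : ℕ) (ρ : ℕ → Q) : ℕ :=
  ∑ j ∈ Finset.range n, A.rank (ρ (j + 1)) * (Fintype.card Q + 1) ^ j

lemma T_lt_pow [Fintype Q] (n : ℕ) (ρ : ℕ → Q) : A.T n ρ < (Fintype.card Q + 1) ^ n := by
  set N := Fintype.card Q
  have h1 : A.T n ρ ≤ ∑ j ∈ Finset.range n, N * (N + 1) ^ j := by
    apply Finset.sum_le_sum
    intro j _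
    exact Nat.mul_le_mul_right _ (A.rank_le_card _)
  have h2 := geom_aux N n
  have hP : 1 ≤ (N + 1) ^ n := Nat.one_le_pow _ _ (by omega)
  omega

lemma T_lt_T [Fintype Q] (n : ℕ) (ρ ρ' : ℕ → Q) (i : ℕ) (hi : i < n)
    (hstrict : A.diSimStrict (ρ (i + 1)) (ρ' (i + 1)))
    (hweak : ∀ j, i + 1 ≤ j → diSim A (ρ j) (ρ' j)) :
    A.T n ρ < A.T n ρ' := by
  set N := Fintype.card Q
  have hsplit : ∀ τ : ℕ → Q, A.T n τ =
      (∑ j ∈ Finset.range i, A.rank (τ (j + 1)) * (N + 1) ^ j) +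
      (∑ j ∈ Finset.Ico i n, A.rank (τ (j + 1)) * (N + 1) ^ j) := by
    intro τ
    rw [T, Finset.range_eq_Ico, ← Finset.sum_Ico_consecutive _ (Nat.zero_le i) (le_of_lt hi), Finset.range_eq_Ico]
  have hico : ∀ τ : ℕ → Q, (∑ j ∈ Finset.Ico i n, A.rank (τ (j + 1)) * (N + 1) ^ j) =
      A.rank (τ (i + 1)) * (N + 1) ^ i + ∑ j ∈ Finset.Ico (i + 1) n, A.rank (τ (j + 1)) * (N + 1) ^ j := by
    intro τ
    rw [← Finset.sum_Ico_consecutive _ (by omega : i ≤ i + 1) (by omega : i + 1 ≤ n)]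
    congr 1
    have hsing : Finset.Ico i (i + 1) = {i} := by rw [Finset.Ico_add_one_right_eq_Icc, Finset.Icc_self]
    rw [hsing, Finset.sum_singleton]
  -- prefix bound
  have hpre : (∑ j ∈ Finset.range i, A.rank (ρ (j + 1)) * (N + 1) ^ j) < (N + 1) ^ i := by
    have h1 : (∑ j ∈ Finset.range i, A.rank (ρ (j + 1)) * (N + 1) ^ j) ≤
        ∑ j ∈ Finset.range i, N * (N + 1) ^ j :=
      Finset.sum_le_sum fun j _ => Nat.mul_le_mul_right _ (A.rank_le_card _)
    have h2 := geom_aux N i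
    have hP : 1 ≤ (N + 1) ^ i := Nat.one_le_pow _ _ (by omega)
    omega
  have hrlt : A.rank (ρ (i + 1)) + 1 ≤ A.rank (ρ' (i + 1)) := A.rank_lt_rank hstrict
  have htail : (∑ j ∈ Finset.Ico (i + 1) n, A.rank (ρ (j + 1)) * (N + 1) ^ j) ≤
      ∑ j ∈ Finset.Ico (i + 1) n, A.rank (ρ' (j + 1)) * (N + 1) ^ j := by
    apply Finset.sum_le_sum
    intro j hj
    exact Nat.mul_le_mul_right _ (A.rank_le_rank (hweak (j + 1) (by
      simp only [Finset.mem_Ico] at hj; omega)))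
  have hPi : 1 ≤ (N + 1) ^ i := Nat.one_le_pow _ _ (by omega)
  have e1 := hsplit ρ; have e2 := hsplit ρ'
  have f1 := hico ρ; have f2 := hico ρ'
  have key : A.rank (ρ (i + 1)) * (N + 1) ^ i + (N + 1) ^ i ≤ A.rank (ρ' (i + 1)) * (N + 1) ^ i := by
    calc A.rank (ρ (i + 1)) * (N + 1) ^ i + (N + 1) ^ i
        = (A.rank (ρ (i + 1)) + 1) * (N + 1) ^ i := by ring
      _ ≤ A.rank (ρ' (i + 1)) * (N + 1) ^ i := Nat.mul_le_mul_right _ hrlt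
  omega

end BA

/-- Pruning with `P(⊑bw, ≺^di)`: simultaneously remove every transition `(p,σ,r)` such
that some transition `(p',σ,r')` exists with `p ⊑bw p'` and `r ≺^di r'`. -/
def pruneBwDi {σ Q : Type} (A : BA σ Q) : BA σ Q where
  I := A.I
  F := A.F
  δ := fun p a r => A.δ p a r ∧
    ¬ ∃ p' r', A.δ p' a r' ∧ A.bwIncl p p' ∧ A.diSimStrict r r'

namespace BA
variable {σ Q : Type} (A : BA σ Q)

/-- one can repair all transitions below `n`, given enough fuel -/
lemma fix_prefix [Fintype Q] (w : ℕ → σ) (n : ℕ) :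
    ∀ fuel : ℕ, ∀ ρ : ℕ → Q, A.InfTrace w ρ → ρ 0 ∈ A.I →
    (Fintype.card Q + 1) ^ n ≤ A.T n ρ + fuel →
    ∃ ρ', A.InfTrace w ρ' ∧ ρ' 0 ∈ A.I ∧ (∀ j, ρ j ∈ A.F → ρ' j ∈ A.F) ∧
      ∀ i < n, (pruneBwDi A).δ (ρ' i) (w i) (ρ' (i + 1)) := by
  intro fuel
  induction fuel with
  | zero =>
    intro ρ htr h0 hfuel
    exact absurd (A.T_lt_pow n ρ) (by omega)
  | succ fuel ih =>
    intro ρ htr h0 hfuel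
    by_cases hgood : ∀ i < n, ¬ ∃ p' r', A.δ p' (w i) r' ∧ A.bwIncl (ρ i) p' ∧
        A.diSimStrict (ρ (i + 1)) r'
    · exact ⟨ρ, htr, h0, fun _ h => h, fun i hi => ⟨htr i, hgood i hi⟩⟩
    · push_neg at hgood
      obtain ⟨i, hi, hpr⟩ := hgood
      obtain ⟨ρ₁, htr₁, h0₁, hF₁, hstrict₁, hweak₁⟩ := A.replace w ρ htr h0 i hpr
      have hTlt : A.T n ρ < A.T n ρ₁ := A.T_lt_T n ρ ρ₁ i hi hstrict₁ hweak₁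
      obtain ⟨ρ', htr', h0', hF', hδ'⟩ := ih ρ₁ htr₁ h0₁ (by omega)
      exact ⟨ρ', htr', h0', fun j hj => hF' j (hF₁ j hj), hδ'⟩

lemma exists_limit_mem {U : Ultrafilter ℕ} (f : ℕ → Q) [Fintype Q] :
    ∃ q : Q, {n | f n = q} ∈ U := by
  by_contra h
  push_neg at h
  have h' : ∀ q : Q, {n | f n ≠ q} ∈ U := by
    intro q
    have := (Ultrafilter.compl_mem_iff_notMem (s := {n | f n = q}) (f := U)).2 (h q)
    simpa [Set.compl_setOf] using this
  have hmem : (⋂ q : Q, {n | f n ≠ q}) ∈ U := Filter.iInter_mem.2 h'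
  obtain ⟨n, hn⟩ := Filter.nonempty_of_mem hmem
  exact (Set.mem_iInter.1 hn (f n)) rfl

end BA

/-- Pruning with (backward trace inclusion, strict direct simulation) is good for
pruning: for any finite-state Büchi automaton `A`, the pruned automaton has the same
language as `A`. -/
theorem prune_bwIncl_diSimStrict_GFP {σ Q : Type} [Fintype Q] (A : BA σ Q) :
    (pruneBwDi A).Lang = A.Lang := by
  ext w
  constructor
  · rintro ⟨ρ, htr, h0, hfair⟩
    exact ⟨ρ, fun i => (htr i).1, h0, hfair⟩
  · rintro ⟨ρ, htr, h0, hfair⟩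
    have H : ∀ n : ℕ, ∃ ρ', A.InfTrace w ρ' ∧ ρ' 0 ∈ A.I ∧ (∀ j, ρ j ∈ A.F → ρ' j ∈ A.F) ∧
        ∀ i < n, (pruneBwDi A).δ (ρ' i) (w i) (ρ' (i + 1)) :=
      fun n => A.fix_prefix w n ((Fintype.card Q + 1) ^ n) ρ htr h0 (Nat.le_add_left _ _)
    choose R hRtr hR0 hRF hRδ using H
    let U : Ultrafilter ℕ := Ultrafilter.of Filter.cofinite
    have hUcof : ∀ s : Set ℕ, s ∈ (Filter.cofinite : Filter ℕ) → s ∈ U :=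
      fun s hs => Ultrafilter.of_le _ hs
    have hlim : ∀ j : ℕ, ∃ q : Q, {n | R n j = q} ∈ U := fun j => BA.exists_limit_mem _
    choose L hL using hlim
    refine ⟨L, ?_, ?_, ?_⟩
    · intro j
      have hgt : {n | j < n} ∈ U := by
        apply hUcof
        rw [Filter.mem_cofinite]
        have : {n | j < n}ᶜ = Set.Iic j := by
          ext n; simp [Nat.not_lt]
        rw [this]
        exact Set.finite_Iic j
      have hmem : ({n | R n j = L j} ∩ {n | R n (j + 1) = L (j + 1)} ∩ {n | j < n}) ∈ U :=
        Filter.inter_mem (Filter.inter_mem (hL j) (hL (j + 1))) hgt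
      obtain ⟨n, hn⟩ := Filter.nonempty_of_mem hmem
      have := hRδ n j hn.2
      rw [hn.1.1, hn.1.2] at this
      exact this
    · obtain ⟨n, hn⟩ := Filter.nonempty_of_mem (hL 0)
      have := hR0 n
      rw [hn] at this
      exact this
    · intro k
      obtain ⟨m, hk, hmF⟩ := hfair k
      refine ⟨m, hk, ?_⟩
      obtain ⟨n, hn⟩ := Filter.nonempty_of_mem (hL m)
      have := hRF n m hmF
      rw [hn] at this
      exact this
end

section
/- The union of the two GFP relations (id, strict direct simulation) and (strict backward simulation, id) is in general not good for pruning: there exists a 4-state Büchi automaton in which pruning simultaneously with both relations removes a word from the language. -/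
namespace BA
variable {σ Q : Type}

/-- `S` is a backward simulation. -/
def IsBwSim (A : BA σ Q) (S : Q → Q → Prop) : Prop :=
  ∀ p q, S p q → (p ∈ A.F → q ∈ A.F) ∧ (p ∈ A.I → q ∈ A.I) ∧
    ∀ a p', A.δ p' a p → ∃ q', A.δ q' a q ∧ S p' q'

/-- Backward simulation: the largest backward simulation relation. -/
def bwSim (A : BA σ Q) (p q : Q) : Prop :=
  ∃ S, IsBwSim A S ∧ S p q

/-- Strict backward simulation. -/
def bwSimStrict (A : BA σ Q) (p q : Q) : Prop :=
  bwSim A p q ∧ ¬ bwSim A q p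

end BA

/-- Pruning simultaneously w.r.t. the union `P(id, ≺^di) ∪ P(≺^bw, id)`:
remove every transition `(p,σ,r)` dominated either by some `(p,σ,r')` with `r ≺^di r'`
or by some `(p',σ,r)` with `p ≺^bw p'`. -/
def pruneUnion {σ Q : Type} (A : BA σ Q) : BA σ Q where
  I := A.I
  F := A.F
  δ := fun p a r => A.δ p a r ∧
    ¬ ((∃ r', A.δ p a r' ∧ A.diSimStrict r r') ∨ (∃ p', A.δ p' a r ∧ A.bwSimStrict p p'))

-- aux part to append before theorem
/-- transitions of the counterexample automaton:
`p=0, q=1, r=2, s=3`; letters `a=0, b=1, c=2`. -/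
def dEx : Fin 4 → Fin 3 → Fin 4 → Bool
  | 0, 0, 1 => true
  | 0, 0, 2 => true
  | 0, 1, 2 => true
  | 1, 0, 3 => true
  | 1, 1, 3 => true
  | 2, 0, 3 => true
  | 3, 2, 3 => true
  | _, _, _ => false

def Aex : BA (Fin 3) (Fin 4) where
  I := {0}
  F := {3}
  δ := fun p a r => dEx p a r = true

def Sdi : Fin 4 → Fin 4 → Bool
  | 2, 1 => true
  | 3, 3 => true
  | _, _ => false

def Sbw : Fin 4 → Fin 4 → Bool
  | 1, 2 => true
  | 0, 0 => true
  | _, _ => false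

lemma diSim_21 : Aex.diSim 2 1 := by
  refine ⟨fun p q => Sdi p q = true, ?_, by decide⟩
  intro p q h
  have key : ∀ p q : Fin 4, Sdi p q = true →
      (p = 3 → q = 3) ∧
      ∀ (a : Fin 3) (p' : Fin 4), dEx p a p' = true →
        ∃ q', dEx q a q' = true ∧ Sdi p' q' = true := by decide
  refine ⟨?_, (key p q h).2⟩
  intro hp
  have : p = 3 := by simpa [Aex] using hp
  have : q = 3 := (key p q h).1 this
  simp [Aex, this]

lemma not_diSim_12 : ¬ Aex.diSim 1 2 := by
  rintro ⟨S, hS, h⟩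
  obtain ⟨-, hstep⟩ := hS 1 2 h
  obtain ⟨q', hq', -⟩ := hstep 1 3 rfl
  have : ∀ x : Fin 4, ¬ (dEx 2 1 x = true) := by decide
  exact this q' hq'

lemma bwSim_12 : Aex.bwSim 1 2 := by
  refine ⟨fun p q => Sbw p q = true, ?_, by decide⟩
  intro p q h
  have key : ∀ p q : Fin 4, Sbw p q = true →
      (p = 3 → q = 3) ∧ (p = 0 → q = 0) ∧
      ∀ (a : Fin 3) (p' : Fin 4), dEx p' a p = true →
        ∃ q', dEx q' a q = true ∧ Sbw p' q' = true := by decide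
  refine ⟨?_, ?_, (key p q h).2.2⟩
  · intro hp
    have : p = 3 := by simpa [Aex] using hp
    have : q = 3 := (key p q h).1 this
    simp [Aex, this]
  · intro hp
    have : p = 0 := by simpa [Aex] using hp
    have : q = 0 := (key p q h).2.1 this
    simp [Aex, this]

lemma not_bwSim_21 : ¬ Aex.bwSim 2 1 := by
  rintro ⟨S, hS, h⟩
  obtain ⟨-, -, hstep⟩ := hS 2 1 h
  obtain ⟨q', hq', -⟩ := hstep 1 0 rfl
  have : ∀ x : Fin 4, ¬ (dEx x 1 1 = true) := by decide
  exact this q' hq'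

/-- The union of the two GFP relations `P(id, ≺^di)` and `P(≺^bw, id)` is in general not
good for pruning: there is a 4-state Büchi automaton (over a 3-letter alphabet) in which
pruning simultaneously with both relations removes a word from the language. -/
theorem union_not_GFP :
    ∃ (A : BA (Fin 3) (Fin 4)) (w : ℕ → Fin 3),
      w ∈ A.Lang ∧ w ∉ (pruneUnion A).Lang := by
  refine ⟨Aex, fun n => if n < 2 then 0 else 2, ?_, ?_⟩
  · -- the word a a c^ω is accepted via p q s s s ...
    refine ⟨fun n => if n = 0 then 0 else if n = 1 then 1 else 3, ?_, ?_, ?_⟩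
    · intro i
      match i with
      | 0 => exact rfl
      | 1 => exact rfl
      | (n+2) =>
        show Aex.δ 3 (if n + 2 < 2 then 0 else 2) 3
        rw [if_neg (by omega : ¬ n + 2 < 2)]
        exact rfl
    · simp [Aex]
    · intro n
      refine ⟨n + 2, by omega, ?_⟩
      simp [Aex]
  · rintro ⟨ρ, htr, hI, -⟩
    have hρ0 : ρ 0 = 0 := by simpa [pruneUnion, Aex] using hI
    have h0 := htr 0
    rw [hρ0] at h0
    simp only [show (if (0:ℕ) < 2 then (0:Fin 3) else 2) = 0 from rfl] at h0
    obtain ⟨hd0, hnp0⟩ := h0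
    have h12 : ρ 1 = 1 ∨ ρ 1 = 2 := by
      have : ∀ x : Fin 4, dEx 0 0 x = true → x = 1 ∨ x = 2 := by decide
      exact this _ hd0
    have hρ1 : ρ 1 = 1 := by
      rcases h12 with h | h
      · exact h
      · exfalso
        exact hnp0 (Or.inl ⟨1, rfl, by rw [h]; exact ⟨diSim_21, not_diSim_12⟩⟩)
    have h1 := htr 1
    rw [hρ1] at h1
    simp only [show (if (1:ℕ) < 2 then (0:Fin 3) else 2) = 0 from rfl] at h1
    obtain ⟨hd1, hnp1⟩ := h1
    have hρ2 : ρ 2 = 3 := by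
      have : ∀ x : Fin 4, dEx 1 0 x = true → x = 3 := by decide
      exact this _ hd1
    exact hnp1 (Or.inr ⟨2, by rw [hρ2]; exact rfl, bwSim_12, not_bwSim_21⟩)
end

section
/- Quotienting by mediated preorder has no effect on fully minimized automata: let A be a Büchi automaton such that (1) A = A/⊑^bw = A/⊑^di (no two distinct states are backward- or direct-simulation equivalent), and (2) for all states x,y, if x ⊑^di y and x ⊑^bw y then x = y. Let M be the mediated preorder, i.e., the largest relation M ⊆ ⊑^di ∘ (⊑^bw)⁻¹ with M ∘ ⊑^di ⊆ M. Then the equivalence induced by M is the identity, hence A = A/M. -/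
namespace BA
variable {σ Q : Type}

lemma isBwSim_bwSim (A : BA σ Q) : A.IsBwSim A.bwSim := by
  rintro p q ⟨S, hS, hpq⟩
  obtain ⟨hF, hI, hstep⟩ := hS p q hpq
  refine ⟨hF, hI, fun a p' h => ?_⟩
  obtain ⟨q', hq', hS'⟩ := hstep a p' h
  exact ⟨q', hq', S, hS, hS'⟩

lemma bwSim_trans {A : BA σ Q} {p q r : Q} (h1 : A.bwSim p q) (h2 : A.bwSim q r) :
    A.bwSim p r := by
  refine ⟨fun x z => ∃ y, A.bwSim x y ∧ A.bwSim y z, ?_, q, h1, h2⟩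
  rintro x z ⟨y, hxy, hyz⟩
  obtain ⟨hF1, hI1, hstep1⟩ := A.isBwSim_bwSim x y hxy
  obtain ⟨hF2, hI2, hstep2⟩ := A.isBwSim_bwSim y z hyz
  refine ⟨fun h => hF2 (hF1 h), fun h => hI2 (hI1 h), fun a x' h => ?_⟩
  obtain ⟨y', hy', hxy'⟩ := hstep1 a x' h
  obtain ⟨z', hz', hyz'⟩ := hstep2 a y' hy'
  exact ⟨z', hz', y', hxy', hyz'⟩

end BA

/-- Quotienting by mediated preorder has no effect on fully minimized automata:
if (1) no two distinct states of `A` are backward- or direct-simulation equivalent, and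
(2) `x ⊑^di y` and `x ⊑^bw y` imply `x = y`, then the equivalence induced by the
mediated preorder `M` (the largest `M ⊆ ⊑^di ∘ (⊑^bw)⁻¹` with `M ∘ ⊑^di ⊆ M`,
a preorder) is the identity. -/
theorem mediated_no_effect {σ Q : Type} (A : BA σ Q)
    (h1di : ∀ x y, A.diSim x y → A.diSim y x → x = y)
    (h1bw : ∀ x y, A.bwSim x y → A.bwSim y x → x = y)
    (h2 : ∀ x y, A.diSim x y → A.bwSim x y → x = y)
    (M : Q → Q → Prop)
    (hMrefl : Reflexive M) (hMtrans : Transitive M)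
    (hMsub : ∀ x y, M x y → ∃ z, A.diSim x z ∧ A.bwSim y z)
    (hMclosed : ∀ x y z, M x y → A.diSim y z → M x z)
    (hMmax : ∀ M' : Q → Q → Prop,
      (∀ x y, M' x y → ∃ z, A.diSim x z ∧ A.bwSim y z) →
      (∀ x y z, M' x y → A.diSim y z → M' x z) →
      ∀ x y, M' x y → M x y) :
    ∀ x y, M x y → M y x → x = y := by
  intro x y hxy hyx
  obtain ⟨z, hxz_di, hyz_bw⟩ := hMsub x y hxy
  obtain ⟨w, hyw_di, hxw_bw⟩ := hMsub y x hyx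
  obtain ⟨z1, hxz1_di, hwz1_bw⟩ := hMsub x w (hMclosed x y w hxy hyw_di)
  have hx_eq_z1 : x = z1 := h2 x z1 hxz1_di (BA.bwSim_trans hxw_bw hwz1_bw)
  have hxw : x = w := h1bw x w hxw_bw (hx_eq_z1 ▸ hwz1_bw)
  obtain ⟨z2, hyz2_di, hzz2_bw⟩ := hMsub y z (hMclosed y x z hyx hxz_di)
  have hy_eq_z2 : y = z2 := h2 y z2 hyz2_di (BA.bwSim_trans hyz_bw hzz2_bw)
  have hyz : y = z := h1bw y z hyz_bw (hy_eq_z2 ▸ hzz2_bw)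
  exact h1di x y (hyz ▸ hxz_di) (hxw ▸ hyw_di)
end

section
/- Inclusion-preserving pruning of A w.r.t. B: let A, B be Büchi automata, let ⊑bw⁻ be the variant of backward trace inclusion between states of A and B that ignores accepting states (only requiring initial-state matching), and ⊑f fair trace inclusion between states of A and B. Pruning from A every transition (p,σ,r) for which B has a transition (p',σ,r') with p ⊑bw⁻ p' and r ⊑f r' is inclusion-preserving: L(A) ⊆ L(B) iff L(Prune(A,B)) ⊆ L(B). -/
/-- Backward trace inclusion between `A` and `B` ignoring accepting states (`⊑bw⁻`):
every initial finite trace of `A` ending in `p` is matched by an initial finite trace of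
`B` on the same word ending in `q` (no condition on accepting states). -/
def bwInclMinusAB {σ Q₁ Q₂ : Type} (A : BA σ Q₁) (B : BA σ Q₂) (p : Q₁) (q : Q₂) : Prop :=
  ∀ (w : ℕ → σ) (m : ℕ) (ρ : ℕ → Q₁),
    A.FinTrace w m ρ → ρ 0 ∈ A.I → ρ m = p →
    ∃ ρ', B.FinTrace w m ρ' ∧ ρ' 0 ∈ B.I ∧ ρ' m = q

/-- Fair trace inclusion between states of `A` and `B`. -/
def fInclAB {σ Q₁ Q₂ : Type} (A : BA σ Q₁) (B : BA σ Q₂) (p : Q₁) (q : Q₂) : Prop :=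
  ∀ (w : ℕ → σ) (ρ : ℕ → Q₁), A.InfTrace w ρ → ρ 0 = p →
    ∃ ρ', B.InfTrace w ρ' ∧ ρ' 0 = q ∧ (A.Fair ρ → B.Fair ρ')

/-- `Prune(A,B)`: remove from `A` every transition `(p,σ,r)` for which `B` has a
transition `(p',σ,r')` with `p ⊑bw⁻ p'` and `r ⊑f r'`. -/
def pruneAB {σ Q₁ Q₂ : Type} (A : BA σ Q₁) (B : BA σ Q₂) : BA σ Q₁ where
  I := A.I
  F := A.F
  δ := fun p a r => A.δ p a r ∧
    ¬ ∃ p' r', B.δ p' a r' ∧ bwInclMinusAB A B p p' ∧ fInclAB A B r r'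

/-- Inclusion-preserving pruning of `A` w.r.t. `B`:
`L(A) ⊆ L(B)` iff `L(Prune(A,B)) ⊆ L(B)`. -/
theorem pruneAB_inclusion_preserving {σ Q₁ Q₂ : Type} (A : BA σ Q₁) (B : BA σ Q₂) :
    A.Lang ⊆ B.Lang ↔ (pruneAB A B).Lang ⊆ B.Lang := by
  constructor
  · -- Prune(A,B) has fewer transitions, so L(Prune) ⊆ L(A) ⊆ L(B)
    intro h w hw
    obtain ⟨ρ, hρ, hI, hF⟩ := hw
    exact h ⟨ρ, fun i => (hρ i).1, hI, hF⟩
  · intro h w hw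
    obtain ⟨ρ, hρ, hI, hF⟩ := hw
    by_cases hp : ∀ i, ¬ ∃ p' r', B.δ p' (w i) r' ∧ bwInclMinusAB A B (ρ i) p' ∧
        fInclAB A B (ρ (i + 1)) r'
    · exact h ⟨ρ, fun i => ⟨hρ i, hp i⟩, hI, hF⟩
    · push_neg at hp
      obtain ⟨i, p', r', hBδ, hbw, hf⟩ := hp
      -- prefix: B-trace up to i ending in p'
      obtain ⟨ρ', hρ'fin, hρ'I, hρ'end⟩ :=
        hbw w i ρ (fun j hj => hρ j) hI rfl
      -- suffix: shifted infinite trace from ρ (i+1)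
      have hsuf : A.InfTrace (fun k => w (i + 1 + k)) (fun k => ρ (i + 1 + k)) := by
        intro k
        have := hρ (i + 1 + k)
        simpa [Nat.add_assoc] using this
      obtain ⟨ρ₂, hρ₂inf, hρ₂0, hρ₂fair⟩ := hf (fun k => w (i + 1 + k)) (fun k => ρ (i + 1 + k))
        hsuf rfl
      have hfair₂ : B.Fair ρ₂ := by
        apply hρ₂fair
        intro n
        obtain ⟨m, hm, hmF⟩ := hF (n + i + 1)
        exact ⟨m - (i + 1), by omega, by
          have : i + 1 + (m - (i + 1)) = m := by omega
          simpa [this] using hmF⟩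
      -- glue
      refine ⟨fun k => if k ≤ i then ρ' k else ρ₂ (k - (i + 1)), ?_, ?_, ?_⟩
      · intro k
        rcases lt_trichotomy k i with hk | hk | hk
        · simp only [if_pos hk.le, if_pos (by omega : k + 1 ≤ i)]
          exact hρ'fin k hk
        · subst hk
          simp only [if_pos le_rfl, if_neg (by omega : ¬ k + 1 ≤ k)]
          have : k + 1 - (k + 1) = 0 := by omega
          rw [this, hρ₂0, hρ'end]
          exact hBδ
        · simp only [if_neg (by omega : ¬ k ≤ i), if_neg (by omega : ¬ k + 1 ≤ i)]
          have h1 : k + 1 - (i + 1) = (k - (i + 1)) + 1 := by omega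
          have h2 : i + 1 + (k - (i + 1)) = k := by omega
          rw [h1]
          have := hρ₂inf (k - (i + 1))
          simpa [h2] using this
      · simpa using hρ'I
      · intro n
        obtain ⟨m, hm, hmF⟩ := hfair₂ n
        refine ⟨i + 1 + m, by omega, ?_⟩
        simp only [if_neg (by omega : ¬ i + 1 + m ≤ i)]
        have : i + 1 + m - (i + 1) = m := by omega
        simpa [this] using hmF
end

section
/- The probability that a Tabakov-Vardi random automaton has no σ-deadlocked state is (α(n,T)/β(n,T))^{|Σ|}: with n states and T = n·td transitions per alphabet symbol placed uniformly at random without repetition among the n² possible (source,target) pairs, independently for each of the |Σ| symbols, the probability that every state has at least one outgoing transition for every symbol equals (α(n,T)/β(n,T))^{|Σ|}, where β(n,T) = C(n², T) and α(n,T) = Σ_{m=n}^{n²} C(m−n, T−n) · Σ_{i=0}^{n} (−1)^i C(n,i) C(m−i·n−1, n−1). -/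
open Finset

/-- The inclusion-exclusion count of `n`-tuples `(x₁,…,xₙ) ∈ {1,…,n}ⁿ` with sum `m`:
`∑ᵢ (−1)ⁱ C(n,i) C(m−i·n−1, n−1)` (a binomial with negative top argument is `0`). -/
def innerCount (n m : ℕ) : ℤ :=
  ∑ i ∈ Finset.range (n + 1),
    (-1 : ℤ) ^ i * (n.choose i : ℤ) *
      (if i * n + 1 ≤ m then (((m - i * n - 1).choose (n - 1) : ℕ) : ℤ) else 0)

/-- `α(n,T) = ∑_{m=n}^{n²} C(m−n, T−n) · ∑_{i=0}^{n} (−1)ⁱ C(n,i) C(m−i·n−1, n−1)`. -/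
def alphaTV (n T : ℕ) : ℤ :=
  ∑ m ∈ Finset.Icc n (n ^ 2), (((m - n).choose (T - n) : ℕ) : ℤ) * innerCount n m

lemma multiset_card_finset_sum {ι α : Type*} (s : Finset ι) (f : ι → Multiset α) :
    Multiset.card (∑ i ∈ s, f i) = ∑ i ∈ s, Multiset.card (f i) := by
  classical
  induction s using Finset.induction with
  | empty => simp
  | insert _ _ h ih => simp [Finset.sum_insert h, ih]

lemma sum_count_nsmul_univ {k : ℕ} (s : Multiset (Fin k)) :
    ∑ i, s.count i • ({i} : Multiset (Fin k)) = s := by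
  classical
  calc ∑ i, s.count i • ({i} : Multiset (Fin k))
      = ∑ i ∈ s.toFinset, s.count i • ({i} : Multiset (Fin k)) := by
        refine (Finset.sum_subset (Finset.subset_univ _) ?_).symm
        intro x _ hx
        simp [Multiset.count_eq_zero_of_notMem (by simpa using hx)]
    _ = s := Multiset.toFinset_sum_count_nsmul_eq s

/-- Stars and bars: tuples in `Fin k → ℕ` with sum `M`. -/
lemma starsBars (k M : ℕ) :
    (Finset.Nat.antidiagonalTuple k M).card = (k + M - 1).choose M := by
  have e : Sym (Fin k) M ≃ {y : Fin k → ℕ // y ∈ Finset.Nat.antidiagonalTuple k M} :=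
    { toFun := fun m => ⟨fun i => m.1.count i, by
        rw [Finset.Nat.mem_antidiagonalTuple]
        rw [Multiset.sum_count_eq_card (fun a _ => Finset.mem_univ a)]
        exact m.2⟩
      invFun := fun y => ⟨∑ i, (y.1 i) • ({i} : Multiset (Fin k)), by
        have hy := Finset.Nat.mem_antidiagonalTuple.1 y.2
        rw [multiset_card_finset_sum]
        simp [Multiset.card_nsmul, hy]⟩
      left_inv := fun m => Subtype.ext (sum_count_nsmul_univ m.1)
      right_inv := fun y => by
        ext i
        simp [Multiset.count_sum', Multiset.count_nsmul, Multiset.count_singleton] }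
  have h1 : Fintype.card (Sym (Fin k) M) = (k + M - 1).choose M := by
    rw [Sym.card_sym_eq_choose, Fintype.card_fin]
  rw [← Fintype.card_coe, ← Fintype.card_congr e, h1]

/-- Count of unbounded tuples with sum `M` that are `≥ n` on all of `I`. -/
lemma cardViol (n M : ℕ) (I : Finset (Fin n)) :
    ((Finset.Nat.antidiagonalTuple n M).filter (fun y => ∀ i ∈ I, n ≤ y i)).card
      = if I.card * n ≤ M then (Finset.Nat.antidiagonalTuple n (M - I.card * n)).card else 0 := by
  classical
  split_ifs with h
  · -- bijection y ↦ y - n·1_I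
    refine Finset.card_bij' (fun y _ => fun i => y i - if i ∈ I then n else 0)
      (fun z _ => fun i => z i + if i ∈ I then n else 0) ?_ ?_ ?_ ?_
    · intro y hy
      obtain ⟨hy1, hy2⟩ := Finset.mem_filter.1 hy
      rw [Finset.Nat.mem_antidiagonalTuple] at hy1 ⊢
      have hle : ∀ i, (if i ∈ I then n else 0) ≤ y i := by
        intro i; split_ifs with hi
        · exact hy2 i hi
        · exact Nat.zero_le _
      rw [Finset.sum_tsub_distrib Finset.univ (fun i _ => hle i), hy1]
      congr 1
      rw [Finset.sum_ite_mem, Finset.univ_inter, Finset.sum_const, smul_eq_mul]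
    · intro z hz
      rw [Finset.Nat.mem_antidiagonalTuple] at hz
      rw [Finset.mem_filter, Finset.Nat.mem_antidiagonalTuple]
      constructor
      · rw [Finset.sum_add_distrib, hz]
        rw [Finset.sum_ite_mem, Finset.univ_inter, Finset.sum_const, smul_eq_mul]
        omega
      · intro i hi; simp [hi]
    · intro y hy
      obtain ⟨-, hy2⟩ := Finset.mem_filter.1 hy
      funext i
      dsimp only
      split_ifs with hi
      · exact Nat.sub_add_cancel (hy2 i hi)
      · simp
    · intro z _
      funext i
      dsimp only
      split_ifs <;> simp
  · rw [Finset.card_eq_zero, Finset.filter_eq_empty_iff]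
    intro y hy hall
    rw [Finset.Nat.mem_antidiagonalTuple] at hy
    apply h
    calc I.card * n = ∑ _i ∈ I, n := by rw [Finset.sum_const, smul_eq_mul]
      _ ≤ ∑ i ∈ I, y i := Finset.sum_le_sum hall
      _ ≤ ∑ i, y i := Finset.sum_le_sum_of_subset (Finset.subset_univ I)
      _ = M := hy

/-- The number of `n`-tuples with entries `< n` and sum `M` is `innerCount n (M+n)`. -/
lemma Ncount (n M : ℕ) (hn : 0 < n) :
    (((Finset.Nat.antidiagonalTuple n M).filter fun y => ∀ i, y i < n).card : ℤ)
      = ∑ i ∈ Finset.range (n + 1),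
          (-1 : ℤ) ^ i * (n.choose i : ℤ) *
            (if i * n + 1 ≤ M + n then (((M + n - i * n - 1).choose (n - 1) : ℕ) : ℤ) else 0) := by
  classical
  have hA : ∃ A, Finset.Nat.antidiagonalTuple n M = A := ⟨_, rfl⟩
  obtain ⟨A, hA⟩ := hA
  rw [hA]
  have step1 : ((A.filter fun y => ∀ i, y i < n).card : ℤ)
      = ∑ y ∈ A, ∑ I ∈ (Finset.univ.filter fun i => n ≤ y i).powerset, (-1 : ℤ) ^ I.card := by
    rw [Finset.card_filter]
    push_cast
    refine Finset.sum_congr rfl fun y _ => ?_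
    rw [Finset.sum_powerset_neg_one_pow_card]
    have hiff : (Finset.univ.filter fun i => n ≤ y i) = ∅ ↔ ∀ i, y i < n := by
      simp [Finset.filter_eq_empty_iff, not_le]
    by_cases hc : ∀ i, y i < n
    · rw [if_pos hc, if_pos (hiff.2 hc)]
    · rw [if_neg hc, if_neg (fun he => hc (hiff.1 he))]
  rw [step1]
  have hps : ∀ y : Fin n → ℕ, (Finset.univ.filter fun i => n ≤ y i).powerset
      = (Finset.univ : Finset (Fin n)).powerset.filter (fun I => ∀ i ∈ I, n ≤ y i) := by
    intro y; ext I
    simp only [Finset.mem_powerset, Finset.mem_filter, Finset.subset_iff, Finset.mem_filter,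
      Finset.mem_univ, true_and, and_true]
    tauto
  have step2 : ∑ y ∈ A, ∑ I ∈ (Finset.univ.filter fun i => n ≤ y i).powerset, (-1 : ℤ) ^ I.card
      = ∑ I ∈ (Finset.univ : Finset (Fin n)).powerset,
          (-1 : ℤ) ^ I.card * ((A.filter fun y => ∀ i ∈ I, n ≤ y i).card : ℤ) := by
    have : ∀ y ∈ A, ∑ I ∈ (Finset.univ.filter fun i => n ≤ y i).powerset, (-1 : ℤ) ^ I.card
        = ∑ I ∈ (Finset.univ : Finset (Fin n)).powerset,
            (if ∀ i ∈ I, n ≤ y i then (-1 : ℤ) ^ I.card else 0) := by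
      intro y _
      rw [hps y, Finset.sum_filter]
    rw [Finset.sum_congr rfl this, Finset.sum_comm]
    refine Finset.sum_congr rfl fun I _ => ?_
    rw [← Finset.sum_filter, Finset.sum_const, nsmul_eq_mul, mul_comm]
  rw [step2]
  have hg : ∀ I : Finset (Fin n), ((A.filter fun y => ∀ i ∈ I, n ≤ y i).card : ℤ)
      = (if I.card * n + 1 ≤ M + n
          then (((M + n - I.card * n - 1).choose (n - 1) : ℕ) : ℤ) else 0) := by
    intro I
    clear step1 step2 hps
    rw [← hA, cardViol]
    obtain ⟨j, hj⟩ : ∃ j, I.card * n = j := ⟨_, rfl⟩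
    rw [hj]
    by_cases hc : j ≤ M
    · rw [if_pos hc, if_pos (by omega), starsBars]
      have h1 : n + (M - j) - 1 = M + n - j - 1 := by omega
      have h2 : n - 1 ≤ M + n - j - 1 := by omega
      rw [h1, ← Nat.choose_symm h2]
      congr 2
      omega
    · rw [if_neg hc]
      split_ifs with hc2
      · rw [Nat.choose_eq_zero_of_lt (by omega)]
      · simp
  calc ∑ I ∈ (Finset.univ : Finset (Fin n)).powerset,
        (-1 : ℤ) ^ I.card * ((A.filter fun y => ∀ i ∈ I, n ≤ y i).card : ℤ)
      = ∑ I ∈ (Finset.univ : Finset (Fin n)).powerset,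
        ((fun j => (-1 : ℤ) ^ j * (if j * n + 1 ≤ M + n
          then (((M + n - j * n - 1).choose (n - 1) : ℕ) : ℤ) else 0)) I.card) := by
        refine Finset.sum_congr rfl fun I _ => ?_
        rw [hg I]
    _ = ∑ i ∈ Finset.range ((Finset.univ : Finset (Fin n)).card + 1),
        (Finset.univ : Finset (Fin n)).card.choose i •
          ((-1 : ℤ) ^ i * (if i * n + 1 ≤ M + n
            then (((M + n - i * n - 1).choose (n - 1) : ℕ) : ℤ) else 0)) :=
        Finset.sum_powerset_apply_card
          (f := fun j => (-1 : ℤ) ^ j * (if j * n + 1 ≤ M + n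
            then (((M + n - j * n - 1).choose (n - 1) : ℕ) : ℤ) else 0))
    _ = _ := by
        rw [Finset.card_univ, Fintype.card_fin]
        refine Finset.sum_congr rfl fun i _ => ?_
        rw [nsmul_eq_mul]
        ring

lemma cover_count (n T : ℕ) (hn : 0 < n) (h1 : n ≤ T) :
    (((Finset.univ : Finset (Finset (Fin n × Fin n))).filter
        (fun S => S.card = T ∧ ∀ r, ∃ c, (r, c) ∈ S)).card : ℤ) = alphaTV n T := by
  classical
  set mx : Finset (Fin n × Fin n) → (Fin n → Fin n) :=
    fun S r => WithBot.unbotD ⟨0, hn⟩ (((S.filter fun p => p.1 = r).image Prod.snd).max) with hmxdef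
  -- characterization of the fibers
  have hmx : ∀ (S : Finset (Fin n × Fin n)) (x : Fin n → Fin n),
      ((∀ r, ∃ c, (r, c) ∈ S) ∧ mx S = x) ↔
        ((∀ r, (r, x r) ∈ S) ∧ ∀ p ∈ S, p.2 ≤ x p.1) := by
    intro S x
    constructor
    · rintro ⟨hcov, hmxeq⟩
      have hne : ∀ r, ((S.filter fun p => p.1 = r).image Prod.snd).Nonempty := by
        intro r
        obtain ⟨c, hc⟩ := hcov r
        exact ⟨c, Finset.mem_image.2 ⟨(r, c), Finset.mem_filter.2 ⟨hc, rfl⟩, rfl⟩⟩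
      have hval : ∀ r, mx S r = Finset.max' _ (hne r) := by
        intro r
        rw [hmxdef]
        dsimp only
        rw [← Finset.coe_max' (hne r), WithBot.unbotD_coe]
      constructor
      · intro r
        have := Finset.max'_mem _ (hne r)
        rw [← hval r, hmxeq] at this
        obtain ⟨p, hp, hp2⟩ := Finset.mem_image.1 this
        obtain ⟨hpS, hp1⟩ := Finset.mem_filter.1 hp
        have : p = (r, x r) := Prod.ext hp1 hp2
        rwa [← this]
      · intro p hp
        have hmem : p.2 ∈ (S.filter fun q => q.1 = p.1).image Prod.snd :=
          Finset.mem_image.2 ⟨p, Finset.mem_filter.2 ⟨hp, rfl⟩, rfl⟩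
        have := Finset.le_max' _ _ hmem
        rwa [← hval p.1, hmxeq] at this
    · rintro ⟨hin, hbd⟩
      have hcov : ∀ r, ∃ c, (r, c) ∈ S := fun r => ⟨x r, hin r⟩
      refine ⟨hcov, ?_⟩
      have hne : ∀ r, ((S.filter fun p => p.1 = r).image Prod.snd).Nonempty := by
        intro r
        exact ⟨x r, Finset.mem_image.2 ⟨(r, x r), Finset.mem_filter.2 ⟨hin r, rfl⟩, rfl⟩⟩
      funext r
      rw [hmxdef]
      dsimp only
      rw [← Finset.coe_max' (hne r), WithBot.unbotD_coe]
      refine le_antisymm (Finset.max'_le _ _ _ ?_) (Finset.le_max' _ _ ?_)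
      · intro c hc
        obtain ⟨p, hp, hp2⟩ := Finset.mem_image.1 hc
        obtain ⟨hpS, hp1⟩ := Finset.mem_filter.1 hp
        calc c = p.2 := hp2.symm
          _ ≤ x p.1 := hbd p hpS
          _ = x r := by rw [hp1]
      · exact Finset.mem_image.2 ⟨(r, x r), Finset.mem_filter.2 ⟨hin r, rfl⟩, rfl⟩
  -- fiberwise decomposition over the max-column function
  have hfib := Finset.card_eq_sum_card_fiberwise
    (f := mx) (t := (Finset.univ : Finset (Fin n → Fin n)))
    (s := (Finset.univ : Finset (Finset (Fin n × Fin n))).filter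
        (fun S => S.card = T ∧ ∀ r, ∃ c, (r, c) ∈ S))
    (fun S _ => Finset.mem_univ _)
  rw [hfib]
  -- compute each fiber
  have hfibcard : ∀ x : Fin n → Fin n,
      ((((Finset.univ : Finset (Finset (Fin n × Fin n))).filter
          (fun S => S.card = T ∧ ∀ r, ∃ c, (r, c) ∈ S)).filter fun S => mx S = x)).card
        = (∑ r, (x r : ℕ)).choose (T - n) := by
    intro x
    set frc : Finset (Fin n × Fin n) := Finset.univ.image (fun r => (r, x r)) with hfrc
    set bel : Finset (Fin n × Fin n) := Finset.univ.filter (fun p => p.2 < x p.1) with hbel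
    have hfrcmem : ∀ p : Fin n × Fin n, p ∈ frc ↔ p = (p.1, x p.1) := by
      intro p
      rw [hfrc]
      simp only [Finset.mem_image, Finset.mem_univ, true_and]
      constructor
      · rintro ⟨r, rfl⟩; rfl
      · intro hp; exact ⟨p.1, hp.symm⟩
    have hfrccard : frc.card = n := by
      rw [hfrc, Finset.card_image_of_injective _ (fun a b hab => congrArg Prod.fst hab),
        Finset.card_univ, Fintype.card_fin]
    have hdisj : ∀ E ⊆ bel, Disjoint E frc := by
      intro E hE
      rw [Finset.disjoint_left]
      intro p hp hpf
      have h1 := Finset.mem_filter.1 (hE hp)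
      have h2 := (hfrcmem p).1 hpf
      have : p.2 = x p.1 := by rw [h2]
      omega
    have hbelcard : bel.card = ∑ r, (x r : ℕ) := by
      rw [hbel, Finset.card_eq_sum_card_fiberwise
        (f := Prod.fst) (t := (Finset.univ : Finset (Fin n))) (fun p _ => Finset.mem_univ _)]
      refine Finset.sum_congr rfl fun r _ => ?_
      have : (Finset.univ.filter (fun p : Fin n × Fin n => p.2 < x p.1)).filter
            (fun p => p.1 = r)
          = (Finset.Iio (x r)).map ⟨fun c => (r, c), fun a b hab => congrArg Prod.snd hab⟩ := by
        ext p
        simp only [Finset.mem_filter, Finset.mem_univ, true_and, Finset.mem_map,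
          Function.Embedding.coeFn_mk, Finset.mem_Iio]
        constructor
        · rintro ⟨hlt, rfl⟩
          exact ⟨p.2, hlt, Prod.mk.eta⟩
        · rintro ⟨c, hc, rfl⟩
          exact ⟨hc, rfl⟩
      rw [this, Finset.card_map, Fin.card_Iio]
    rw [← hbelcard, ← Finset.card_powersetCard]
    -- bijection with the powersetCard
    refine Finset.card_bij' (fun S _ => S \ frc) (fun E _ => E ∪ frc) ?_ ?_ ?_ ?_
    · intro S hS
      rw [Finset.mem_filter] at hS
      obtain ⟨hS1, hS2⟩ := hS
      rw [Finset.mem_filter] at hS1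
      obtain ⟨-, hcard, hcov⟩ := hS1
      have hkey := (hmx S x).1 ⟨hcov, hS2⟩
      obtain ⟨hin, hbd⟩ := hkey
      have hsub : frc ⊆ S := by
        intro p hp
        rw [(hfrcmem p).1 hp]
        exact hin p.1
      rw [Finset.mem_powersetCard]
      constructor
      · intro p hp
        rw [Finset.mem_sdiff] at hp
        obtain ⟨hpS, hpnf⟩ := hp
        rw [hbel, Finset.mem_filter]
        refine ⟨Finset.mem_univ _, ?_⟩
        have hle := hbd p hpS
        rcases lt_or_eq_of_le hle with h | h
        · exact h
        · exact absurd ((hfrcmem p).2 (Prod.ext rfl h)) hpnf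
      · rw [Finset.card_sdiff_of_subset hsub, hcard, hfrccard]
    · intro E hE
      rw [Finset.mem_powersetCard] at hE
      obtain ⟨hEsub, hEcard⟩ := hE
      have hd := hdisj E hEsub
      have hcovE : ∀ r, (r, x r) ∈ E ∪ frc :=
        fun r => Finset.mem_union_right _ ((hfrcmem (r, x r)).2 rfl)
      have hbdE : ∀ p ∈ E ∪ frc, p.2 ≤ x p.1 := by
        intro p hp
        rcases Finset.mem_union.1 hp with h | h
        · exact le_of_lt (Finset.mem_filter.1 (hEsub h)).2
        · exact le_of_eq (congrArg Prod.snd ((hfrcmem p).1 h))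
      have hkey := (hmx (E ∪ frc) x).2 ⟨hcovE, hbdE⟩
      rw [Finset.mem_filter, Finset.mem_filter]
      refine ⟨⟨Finset.mem_univ _, ?_, hkey.1⟩, hkey.2⟩
      rw [Finset.card_union_of_disjoint hd, hEcard, hfrccard]
      omega
    · -- left inverse
      intro S hS
      rw [Finset.mem_filter] at hS
      obtain ⟨hS1, hS2⟩ := hS
      rw [Finset.mem_filter] at hS1
      obtain ⟨-, hcard, hcov⟩ := hS1
      have hin := ((hmx S x).1 ⟨hcov, hS2⟩).1
      have hsub : frc ⊆ S := by
        intro p hp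
        rw [(hfrcmem p).1 hp]
        exact hin p.1
      exact Finset.sdiff_union_of_subset hsub
    · -- right inverse
      intro E hE
      rw [Finset.mem_powersetCard] at hE
      exact Finset.union_sdiff_cancel_right (hdisj E hE.1)
  have hmap : ∀ x : Fin n → Fin n, x ∈ (Finset.univ : Finset (Fin n → Fin n)) →
      (∑ r, ((x r : ℕ) + 1)) ∈ Finset.Icc n (n ^ 2) := by
    intro x _
    rw [Finset.mem_Icc]
    constructor
    · calc n = ∑ _r : Fin n, 1 := by
            rw [Finset.sum_const, smul_eq_mul, mul_one, Finset.card_univ, Fintype.card_fin]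
        _ ≤ ∑ r, ((x r : ℕ) + 1) := Finset.sum_le_sum fun r _ => by omega
    · calc ∑ r, ((x r : ℕ) + 1) ≤ ∑ _r : Fin n, n :=
            Finset.sum_le_sum fun r _ => (x r).is_lt
        _ = n ^ 2 := by
            rw [Finset.sum_const, smul_eq_mul, Finset.card_univ, Fintype.card_fin, sq]
  have hstep : ∑ b : Fin n → Fin n,
        (((Finset.univ : Finset (Finset (Fin n × Fin n))).filter
          (fun S => S.card = T ∧ ∀ r, ∃ c, (r, c) ∈ S)).filter fun S => mx S = b).card
      = ∑ m ∈ Finset.Icc n (n ^ 2),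
          ((Finset.univ.filter fun x : Fin n → Fin n => ∑ r, ((x r : ℕ) + 1) = m).card)
            * (m - n).choose (T - n) := by
    rw [Finset.sum_congr rfl (fun b _ => hfibcard b),
      ← Finset.sum_fiberwise_of_maps_to hmap (fun x : Fin n → Fin n => (∑ r, (x r : ℕ)).choose (T - n))]
    refine Finset.sum_congr rfl fun m hm => ?_
    have hinner : ∀ x ∈ Finset.univ.filter fun x : Fin n → Fin n => ∑ r, ((x r : ℕ) + 1) = m,
        (∑ r, (x r : ℕ)).choose (T - n) = (m - n).choose (T - n) := by
      intro x hx
      have hx2 := (Finset.mem_filter.1 hx).2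
      have hsum : ∑ r, ((x r : ℕ) + 1) = (∑ r, (x r : ℕ)) + n := by
        rw [Finset.sum_add_distrib, Finset.sum_const, smul_eq_mul, mul_one,
          Finset.card_univ, Fintype.card_fin]
      have : ∑ r, (x r : ℕ) = m - n := by omega
      rw [this]
    rw [Finset.sum_congr rfl hinner, Finset.sum_const, smul_eq_mul]
  rw [hstep]
  push_cast
  have hfin : ∀ m ∈ Finset.Icc n (n ^ 2),
      ((Finset.univ.filter fun x : Fin n → Fin n => ∑ r, ((x r : ℕ) + 1) = m).card : ℤ)
        = innerCount n m := by
    intro m hm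
    clear hfib hfibcard hstep hmap hmx
    have hmn : n ≤ m := (Finset.mem_Icc.1 hm).1
    have hcard : (Finset.univ.filter fun x : Fin n → Fin n => ∑ r, ((x r : ℕ) + 1) = m).card
        = ((Finset.Nat.antidiagonalTuple n (m - n)).filter fun y => ∀ i, y i < n).card := by
      refine Finset.card_bij' (fun x _ => fun i => (x i : ℕ))
        (fun y hy => fun i => ⟨y i, (Finset.mem_filter.1 hy).2 i⟩) ?_ ?_ ?_ ?_
      · intro x hx
        have hx2 := (Finset.mem_filter.1 hx).2
        rw [Finset.mem_filter, Finset.Nat.mem_antidiagonalTuple]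
        have hsum : ∑ r, ((x r : ℕ) + 1) = (∑ r, (x r : ℕ)) + n := by
          rw [Finset.sum_add_distrib, Finset.sum_const, smul_eq_mul, mul_one,
            Finset.card_univ, Fintype.card_fin]
        exact ⟨by omega, fun i => (x i).is_lt⟩
      · intro y hy
        obtain ⟨hy1, hy2⟩ := Finset.mem_filter.1 hy
        rw [Finset.Nat.mem_antidiagonalTuple] at hy1
        rw [Finset.mem_filter]
        refine ⟨Finset.mem_univ _, ?_⟩
        dsimp only
        rw [Finset.sum_add_distrib, Finset.sum_const, smul_eq_mul, mul_one,
          Finset.card_univ, Fintype.card_fin, hy1]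
        omega
      · intro x _; funext i; exact Fin.ext rfl
      · intro y _; funext i; rfl
    rw [hcard]
    have := Ncount n (m - n) hn
    rw [Nat.sub_add_cancel hmn] at this
    rw [this]
    rfl
  rw [Finset.sum_congr rfl (fun m hm => by rw [hfin m hm])]
  unfold alphaTV
  exact Finset.sum_congr rfl fun m hm => mul_comm _ _

open Classical in
/-- Tabakov-Vardi random automata: for each of `s = |Σ|` alphabet symbols independently,
a uniformly random `T`-element set of transitions (`T = n·td`) is chosen among the `n²`
possible ones. The probability that every state has at least one outgoing transition
for every symbol (i.e. no σ-deadlocked state) equals `(α(n,T)/β(n,T))^s`, where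
`β(n,T) = C(n²,T)`. -/
theorem tabakov_vardi_no_deadlock_probability (n T s : ℕ)
    (hn : 0 < n) (h1 : n ≤ T) (h2 : T ≤ n ^ 2) :
    ((Fintype.card {f : Fin s → {S : Finset (Fin n × Fin n) // S.card = T} //
        ∀ (k : Fin s) (r : Fin n), ∃ c : Fin n, (r, c) ∈ ((f k : {S : Finset (Fin n × Fin n) // S.card = T}) : Finset (Fin n × Fin n))} : ℚ) /
      (Fintype.card (Fin s → {S : Finset (Fin n × Fin n) // S.card = T}) : ℚ))
    = (((alphaTV n T : ℤ) : ℚ) / (((n ^ 2).choose T : ℕ) : ℚ)) ^ s := by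
  classical
  let ST := {S : Finset (Fin n × Fin n) // S.card = T}
  rw [← Nat.card_eq_fintype_card, ← Nat.card_eq_fintype_card]
  -- numerator
  have hnum : Nat.card {f : Fin s → ST //
      ∀ (k : Fin s) (r : Fin n), ∃ c : Fin n, (r, c) ∈ ((f k : ST) : Finset (Fin n × Fin n))}
      = (((Finset.univ : Finset (Finset (Fin n × Fin n))).filter
          (fun S => S.card = T ∧ ∀ r, ∃ c, (r, c) ∈ S)).card) ^ s := by
    rw [Nat.card_congr
      (Equiv.subtypePiEquivPi (p := fun (k : Fin s) (g : ST) =>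
        ∀ r : Fin n, ∃ c : Fin n, (r, c) ∈ (g : Finset (Fin n × Fin n))))]
    rw [Nat.card_pi, Finset.prod_const, Finset.card_univ, Fintype.card_fin]
    congr 1
    rw [Nat.card_congr
      (Equiv.subtypeSubtypeEquivSubtypeInter (p := fun S : Finset (Fin n × Fin n) => S.card = T)
        (q := fun S => ∀ r : Fin n, ∃ c : Fin n, (r, c) ∈ S))]
    rw [Nat.card_eq_fintype_card, Fintype.card_subtype]
  -- denominator
  have hden : Nat.card (Fin s → ST) = ((n ^ 2).choose T) ^ s := by
    rw [Nat.card_fun, Nat.card_eq_fintype_card, Nat.card_eq_fintype_card, Fintype.card_fin]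
    congr 1
    rw [show Fintype.card ST = (Fintype.card (Fin n × Fin n)).choose T from
        Fintype.card_finset_len T,
      Fintype.card_prod, Fintype.card_fin, sq]
  rw [hnum, hden]
  have hcov := cover_count n T hn h1
  have hcovQ : ((((Finset.univ : Finset (Finset (Fin n × Fin n))).filter
      (fun S => S.card = T ∧ ∀ r, ∃ c, (r, c) ∈ S)).card : ℚ)) = ((alphaTV n T : ℤ) : ℚ) := by
    exact_mod_cast congrArg (fun z : ℤ => (z : ℚ)) hcov
  push_cast
  rw [hcovQ, div_pow]
end

section
/- The number of T-element subsets of an n×n grid whose every row is nonempty equals Σ_{m=n}^{n²} C(m−n, T−n) · Σ_{i=0}^{n} (−1)^i C(n,i) C(m−i·n−1, n−1), for n ≤ T ≤ n². -/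
section Helpers
open Finset

lemma sum_choose_aux (k : ℕ) : ∀ n : ℕ, ∑ b ∈ range (n+1), (b + k - 1).choose b = (n + k).choose n := by
  intro n
  induction n with
  | zero => simp
  | succ n ih =>
    rw [Finset.sum_range_succ, ih, show n + 1 + k - 1 = n + k from by omega,
      show n + 1 + k = (n + k) + 1 from by omega, Nat.choose_succ_succ]

lemma list_sum_range (m : ℕ) (f : ℕ → ℕ) : ((List.range m).map f).sum = ∑ i ∈ Finset.range m, f i := rfl

lemma length_adt : ∀ k n : ℕ, (List.Nat.antidiagonalTuple k n).length = (n + k - 1).choose n := by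
  intro k
  induction k with
  | zero =>
    intro n
    cases n with
    | zero => simp [List.Nat.antidiagonalTuple]
    | succ n => simp [List.Nat.antidiagonalTuple, Nat.choose_eq_zero_of_lt]
  | succ k ih =>
    intro n
    rw [List.Nat.antidiagonalTuple, List.length_flatMap]
    simp only [Function.comp_def, List.length_map, ih]
    rw [List.Nat.antidiagonal, List.map_map, list_sum_range]
    simp only [Function.comp_apply]
    calc ∑ i ∈ Finset.range (n+1), ((n-i) + k - 1).choose (n-i)
        = ∑ b ∈ Finset.range (n+1), (b + k - 1).choose b := by
          rw [← Finset.sum_range_reflect (fun b => (b + k - 1).choose b) (n+1)]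
          apply Finset.sum_congr rfl; intro i hi
          simp only [Finset.mem_range] at hi
          congr 1 <;> omega
      _ = (n + (k+1) - 1).choose n := by rw [sum_choose_aux, show n + (k+1) - 1 = n + k from by omega]

lemma card_adt (k n : ℕ) : (Finset.Nat.antidiagonalTuple k n).card = (n + k - 1).choose n :=
  length_adt k n

lemma sum_ind (n : ℕ) (A : Finset (Fin n)) : ∑ i, (if i ∈ A then n else 0) = A.card * n := by
  rw [Finset.sum_ite_mem, univ_inter, Finset.sum_const, smul_eq_mul]

lemma card_shift (n s : ℕ) (A : Finset (Fin n)) :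
    ((Finset.Nat.antidiagonalTuple n s).filter (fun f => ∀ i ∈ A, n ≤ f i)).card
      = if A.card * n ≤ s then (s - A.card * n + n - 1).choose (s - A.card * n) else 0 := by
  split_ifs with h
  · rw [← card_adt]
    apply Finset.card_bij' (fun f _ => fun i => f i - if i ∈ A then n else 0)
      (fun g _ => fun i => g i + if i ∈ A then n else 0)
    · intro f hf
      simp only [Finset.mem_filter, Finset.Nat.mem_antidiagonalTuple] at hf ⊢
      obtain ⟨hsum, hA⟩ := hf
      rw [Finset.sum_tsub_distrib]
      · rw [hsum, sum_ind]
      · intro i _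
        by_cases hi : i ∈ A
        · simpa [hi] using hA i hi
        · simp [hi]
    · intro g hg
      simp only [Finset.Nat.mem_antidiagonalTuple] at hg
      simp only [Finset.mem_filter, Finset.Nat.mem_antidiagonalTuple]
      constructor
      · rw [Finset.sum_add_distrib, hg, sum_ind]; omega
      · intro i hi; simp [hi]
    · intro f hf
      simp only [Finset.mem_filter, Finset.Nat.mem_antidiagonalTuple] at hf
      funext i
      by_cases hi : i ∈ A
      · have := hf.2 i hi; simp [hi]; omega
      · simp [hi]
    · intro g _
      funext i
      by_cases hi : i ∈ A <;> simp [hi]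
  · rw [Finset.card_eq_zero, Finset.filter_eq_empty_iff]
    intro f hf hA
    simp only [Finset.Nat.mem_antidiagonalTuple] at hf
    apply h
    calc A.card * n = ∑ _i ∈ A, n := by rw [Finset.sum_const, smul_eq_mul]
      _ ≤ ∑ i ∈ A, f i := Finset.sum_le_sum hA
      _ ≤ ∑ i, f i := Finset.sum_le_sum_of_subset (Finset.subset_univ A)
      _ = s := hf

lemma powerset_eq_filter_univ (n : ℕ) (B : Finset (Fin n)) :
    B.powerset = Finset.univ.powerset.filter (fun A => A ⊆ B) := by
  ext A; simp [Finset.mem_powerset]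

lemma dice (n s : ℕ) (hn : 0 < n) :
    (((Finset.Nat.antidiagonalTuple n s).filter (fun f => ∀ i, f i < n)).card : ℤ)
      = ∑ i ∈ range (n+1), (-1:ℤ)^i * (n.choose i : ℤ) *
          (if i*n ≤ s then (((s - i*n + n - 1).choose (n-1) : ℕ) : ℤ) else 0) := by
  have key : ∀ f : Fin n → ℕ, (if (∀ i, f i < n) then (1:ℤ) else 0)
      = ∑ A ∈ (Finset.univ.powerset : Finset (Finset (Fin n))),
          (if A ⊆ Finset.univ.filter (fun i => n ≤ f i) then (-1:ℤ)^A.card else 0) := by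
    intro f
    rw [← Finset.sum_filter, ← powerset_eq_filter_univ, Finset.sum_powerset_neg_one_pow_card]
    congr 1
    simp only [Finset.filter_eq_empty_iff, eq_iff_iff, Finset.mem_univ, true_implies, not_le]
  rw [Finset.card_filter]
  push_cast
  calc (∑ f ∈ Finset.Nat.antidiagonalTuple n s, if (∀ i, f i < n) then (1:ℤ) else 0)
      = ∑ f ∈ Finset.Nat.antidiagonalTuple n s, ∑ A ∈ (Finset.univ.powerset : Finset (Finset (Fin n))),
          (if A ⊆ Finset.univ.filter (fun i => n ≤ f i) then (-1:ℤ)^A.card else 0) := by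
        exact Finset.sum_congr rfl fun f _ => key f
    _ = ∑ A ∈ (Finset.univ.powerset : Finset (Finset (Fin n))),
          ∑ f ∈ Finset.Nat.antidiagonalTuple n s,
          (if (∀ i ∈ A, n ≤ f i) then (-1:ℤ)^A.card else 0) := by
        rw [Finset.sum_comm]
        refine Finset.sum_congr rfl fun A _ => Finset.sum_congr rfl fun f _ => ?_
        congr 1
        simp [Finset.subset_iff]
    _ = ∑ A ∈ (Finset.univ.powerset : Finset (Finset (Fin n))),
          (-1:ℤ)^A.card * (if A.card * n ≤ s then (((s - A.card*n + n - 1).choose (n-1) : ℕ) : ℤ) else 0) := by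
        refine Finset.sum_congr rfl fun A _ => ?_
        rw [← Finset.sum_filter, Finset.sum_const, card_shift]
        split_ifs with h
        · rw [show (s - A.card * n + n - 1).choose (s - A.card * n)
              = (s - A.card * n + n - 1).choose (n - 1) from ?_]
          · push_cast; ring
          · rw [← Nat.choose_symm (by omega : s - A.card * n ≤ s - A.card*n + n - 1),
              show s - A.card*n + n - 1 - (s - A.card * n) = n - 1 from by omega]
        · simp
    _ = ∑ i ∈ range (n+1), (-1:ℤ)^i * (n.choose i : ℤ) *
          (if i*n ≤ s then (((s - i*n + n - 1).choose (n-1) : ℕ) : ℤ) else 0) := by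
        rw [Finset.sum_powerset_apply_card
          (fun j => (-1:ℤ)^j * (if j*n ≤ s then (((s - j*n + n - 1).choose (n-1) : ℕ) : ℤ) else 0))]
        simp only [Finset.card_univ, Fintype.card_fin, nsmul_eq_mul]
        exact Finset.sum_congr rfl fun i _ => by ring

lemma innerCount_eq (n m : ℕ) (hn : 0 < n) (hm : n ≤ m) :
    innerCount n m
      = (((Finset.Nat.antidiagonalTuple n (m - n)).filter (fun f => ∀ i, f i < n)).card : ℤ) := by
  rw [dice n (m - n) hn, innerCount]
  refine Finset.sum_congr rfl fun i _ => ?_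
  congr 1
  split_ifs with h1 h2 h2
  · congr 2; omega
  · norm_cast
    exact Nat.choose_eq_zero_of_lt (by omega)
  · omega
  · rfl

lemma card_fin_eq (n s : ℕ) :
    (Finset.univ.filter (fun g : Fin n → Fin n => ∑ i, ((g i : ℕ)) = s)).card
      = ((Finset.Nat.antidiagonalTuple n s).filter (fun f => ∀ i, f i < n)).card := by
  refine Finset.card_bij' (fun g _ => fun i => ((g i : ℕ)))
    (fun f hf => fun i => (⟨f i, (Finset.mem_filter.mp hf).2 i⟩ : Fin n)) ?_ ?_ ?_ ?_
  · intro g hg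
    simp only [Finset.mem_filter, Finset.mem_univ, true_and] at hg
    simp only [Finset.mem_filter, Finset.Nat.mem_antidiagonalTuple]
    exact ⟨hg, fun i => (g i).isLt⟩
  · intro f hf
    simp only [Finset.mem_filter, Finset.Nat.mem_antidiagonalTuple] at hf
    simp only [Finset.mem_filter, Finset.mem_univ, true_and]
    exact hf.1
  · intro g _; rfl
  · intro f _; rfl

lemma alpha_eq (n T : ℕ) (hn : 0 < n) :
    alphaTV n T = ∑ g : Fin n → Fin n, (((∑ i, (g i : ℕ)).choose (T - n) : ℕ) : ℤ) := by
  have key : ∀ g : Fin n → Fin n, ∑ i, ((g i : ℕ) + 1) = ∑ i, (g i : ℕ) + n := by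
    intro g
    rw [Finset.sum_add_distrib, Finset.sum_const, Finset.card_univ, Fintype.card_fin,
      smul_eq_mul, mul_one]
  rw [← Finset.sum_fiberwise_of_maps_to (t := Finset.Icc n (n^2))
    (g := fun g : Fin n → Fin n => ∑ i, ((g i : ℕ) + 1))
    (fun g _ => by
      simp only [Finset.mem_Icc, key g, pow_two]
      constructor
      · omega
      · have : ∑ i, ((g i : ℕ) + 1) ≤ ∑ _i : Fin n, n :=
          Finset.sum_le_sum (fun i _ => (g i).isLt)
        simp only [Finset.sum_const, Finset.card_univ, Fintype.card_fin, smul_eq_mul] at this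
        rw [key g] at this
        omega)
    (f := fun g : Fin n → Fin n => (((∑ i, (g i : ℕ)).choose (T - n) : ℕ) : ℤ))]
  rw [alphaTV]
  refine Finset.sum_congr rfl fun m hm => ?_
  simp only [Finset.mem_Icc] at hm
  have hfib : Finset.univ.filter (fun g : Fin n → Fin n => ∑ i, ((g i : ℕ) + 1) = m)
      = Finset.univ.filter (fun g : Fin n → Fin n => ∑ i, ((g i : ℕ)) = m - n) := by
    ext g
    simp only [Finset.mem_filter, Finset.mem_univ, true_and, key g]
    omega
  rw [hfib, innerCount_eq n m hn hm.1, ← card_fin_eq]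
  rw [Finset.sum_congr rfl (fun g hg => by
    simp only [Finset.mem_filter] at hg
    rw [hg.2]), Finset.sum_const, nsmul_eq_mul, mul_comm]


open Classical in
lemma main_count (n T : ℕ) (hn : 0 < n) (h1 : n ≤ T) :
    (Finset.univ.filter (fun S : Finset (Fin n × Fin n) =>
        S.card = T ∧ ∀ r : Fin n, ∃ c : Fin n, (r, c) ∈ S)).card
      = ∑ g : Fin n → Fin n, (∑ i, (g i : ℕ)).choose (T - n) := by
  set key : Finset (Fin n × Fin n) → (Fin n → Fin n) := fun S r =>
    ⟨(S.filter (fun p => p.1 = r)).sup (fun p => (p.2 : ℕ)),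
      (Finset.sup_lt_iff (by simpa using hn)).mpr fun p _ => p.2.isLt⟩ with hkey
  rw [Finset.card_eq_sum_card_fiberwise (f := key) (t := Finset.univ)
    (fun S _ => Finset.mem_univ _)]
  refine Finset.sum_congr rfl fun g _ => ?_
  set P : Finset (Fin n × Fin n) := Finset.univ.filter (fun p => (p.2 : ℕ) < (g p.1 : ℕ)) with hP
  set R : Finset (Fin n × Fin n) := Finset.univ.image (fun r => (r, g r)) with hR
  have hinj : Function.Injective (fun r : Fin n => (r, g r)) := fun a b h => (Prod.mk.injEq _ _ _ _ ▸ h).1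
  have hmemR : ∀ p : Fin n × Fin n, p ∈ R ↔ p.2 = g p.1 := by
    intro p
    simp only [hR, Finset.mem_image, Finset.mem_univ, true_and]
    constructor
    · rintro ⟨r, hr⟩; rw [← hr]
    · intro h; exact ⟨p.1, by rw [← h]⟩
  have hcardR : R.card = n := by
    rw [hR, Finset.card_image_of_injective _ hinj, Finset.card_univ, Fintype.card_fin]
  have hcardP : P.card = ∑ i, (g i : ℕ) := by
    rw [hP, Finset.card_eq_sum_card_fiberwise (f := Prod.fst) (t := Finset.univ)
      (fun p _ => Finset.mem_univ _)]
    refine Finset.sum_congr rfl fun r _ => ?_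
    rw [Finset.filter_filter]
    have himg : (Finset.univ.filter fun p : Fin n × Fin n => (p.2 : ℕ) < (g p.1 : ℕ) ∧ p.1 = r)
        = (Finset.univ.filter (fun c : Fin n => c < g r)).image (fun c => (r, c)) := by
      ext ⟨a, b⟩
      simp only [Finset.mem_filter, Finset.mem_univ, true_and, Finset.mem_image, Fin.lt_def]
      constructor
      · rintro ⟨hb, rfl⟩; exact ⟨b, hb, rfl⟩
      · rintro ⟨c, hc, h⟩
        obtain ⟨rfl, rfl⟩ : r = a ∧ c = b := by
          constructor <;> [exact congrArg Prod.fst h; exact congrArg Prod.snd h]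
        exact ⟨hc, rfl⟩
    rw [himg, Finset.card_image_of_injective _ (fun a b h => congrArg Prod.snd h)]
    have : Finset.univ.filter (fun c : Fin n => c < g r) = Finset.Iio (g r) := by
      ext c; simp
    rw [this, Fin.card_Iio]
  -- properties of members of the fiber
  have fiber_prop : ∀ S : Finset (Fin n × Fin n),
      S.card = T → (∀ r : Fin n, ∃ c : Fin n, (r, c) ∈ S) → key S = g →
      R ⊆ S ∧ (∀ p ∈ S, (p.2 : ℕ) ≤ (g p.1 : ℕ)) := by
    intro S hT hrow hk
    have hsup_eq : ∀ r : Fin n,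
        (S.filter (fun q => q.1 = r)).sup (fun q => (q.2 : ℕ)) = (g r : ℕ) := fun r =>
      congrArg Fin.val (congrFun hk r)
    have hle : ∀ p ∈ S, (p.2 : ℕ) ≤ (g p.1 : ℕ) := by
      intro p hp
      have h0 : (p.2 : ℕ) ≤ (S.filter (fun q => q.1 = p.1)).sup (fun q => (q.2 : ℕ)) :=
        Finset.le_sup (f := fun q : Fin n × Fin n => (q.2 : ℕ))
          (Finset.mem_filter.mpr ⟨hp, rfl⟩)
      exact le_trans h0 (le_of_eq (hsup_eq p.1))
    refine ⟨?_, hle⟩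
    intro p hp
    rw [hmemR] at hp
    obtain ⟨c, hc⟩ := hrow p.1
    have hne : (S.filter (fun q => q.1 = p.1)).Nonempty :=
      ⟨(p.1, c), Finset.mem_filter.mpr ⟨hc, rfl⟩⟩
    obtain ⟨q, hq, hsup⟩ := Finset.exists_mem_eq_sup _ hne (fun q : Fin n × Fin n => (q.2 : ℕ))
    have hq1 : q.1 = p.1 := (Finset.mem_filter.mp hq).2
    have hv : (q.2 : ℕ) = (g p.1 : ℕ) := by rw [← hsup]; exact hsup_eq p.1
    have hq2 : q.2 = g p.1 := Fin.ext hv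
    have hqS : q ∈ S := (Finset.mem_filter.mp hq).1
    rwa [show q = p from Prod.ext hq1 (by rw [hq2, hp])] at hqS
  rw [show ((∑ i, (g i : ℕ)).choose (T - n)) = ((P.powersetCard (T - n)).card) from by
    rw [Finset.card_powersetCard, hcardP]]
  apply Finset.card_bij' (fun S _ => S \ R) (fun E _ => R ∪ E) ?_ ?_ ?_ ?_
  · -- forward maps into powersetCard
    intro S hS
    simp only [Finset.mem_filter, Finset.mem_univ, true_and] at hS
    obtain ⟨⟨hT, hrow⟩, hk⟩ := hS
    obtain ⟨hRS, hle⟩ := fiber_prop S hT hrow hk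
    rw [Finset.mem_powersetCard]
    constructor
    · intro p hp
      rw [Finset.mem_sdiff] at hp
      rw [hP, Finset.mem_filter]
      refine ⟨Finset.mem_univ _, ?_⟩
      have h2 := hle p hp.1
      have h3 : ¬ p.2 = g p.1 := fun h => hp.2 ((hmemR p).mpr h)
      have h4 : (p.2 : ℕ) ≠ (g p.1 : ℕ) := fun h => h3 (Fin.ext h)
      omega
    · rw [Finset.card_sdiff_of_subset hRS, hT, hcardR]
  · -- backward maps into fiber
    intro E hE
    rw [Finset.mem_powersetCard] at hE
    obtain ⟨hEP, hcard⟩ := hE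
    have hlt : ∀ p ∈ E, (p.2 : ℕ) < (g p.1 : ℕ) := by
      intro p hp
      have := hEP hp
      rw [hP, Finset.mem_filter] at this
      exact this.2
    have hdisj : Disjoint R E := by
      rw [Finset.disjoint_left]
      intro p hpR hpE
      have hv : p.2 = g p.1 := (hmemR p).mp hpR
      exact absurd (hlt p hpE) (by rw [hv]; exact lt_irrefl _)
    simp only [Finset.mem_filter, Finset.mem_univ, true_and]
    have hrow : ∀ r : Fin n, ∃ c : Fin n, (r, c) ∈ R ∪ E := by
      intro r
      exact ⟨g r, Finset.mem_union_left _ ((hmemR (r, g r)).mpr rfl)⟩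
    refine ⟨⟨?_, hrow⟩, ?_⟩
    · rw [Finset.card_union_of_disjoint hdisj, hcardR, hcard]
      omega
    · -- key (R ∪ E) = g
      funext r
      apply Fin.ext
      show ((R ∪ E).filter (fun p => p.1 = r)).sup (fun p => (p.2 : ℕ)) = (g r : ℕ)
      apply le_antisymm
      · rw [Finset.sup_le_iff]
        intro p hp
        rw [Finset.mem_filter, Finset.mem_union] at hp
        obtain ⟨hpm, hp1⟩ := hp
        rcases hpm with h | h
        · rw [← hp1, ((hmemR p).mp h)]
        · rw [← hp1]; exact le_of_lt (hlt p h)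
      · exact Finset.le_sup (s := (R ∪ E).filter (fun p => p.1 = r))
          (f := fun p : Fin n × Fin n => (p.2 : ℕ)) (b := (r, g r))
          (Finset.mem_filter.mpr ⟨Finset.mem_union_left _ ((hmemR (r, g r)).mpr rfl), rfl⟩)
  · -- left inverse
    intro S hS
    simp only [Finset.mem_filter, Finset.mem_univ, true_and] at hS
    obtain ⟨⟨hT, hrow⟩, hk⟩ := hS
    obtain ⟨hRS, _⟩ := fiber_prop S hT hrow hk
    show R ∪ (S \ R) = S
    rw [Finset.union_comm, Finset.sdiff_union_of_subset hRS]
  · -- right inverse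
    intro E hE
    rw [Finset.mem_powersetCard] at hE
    have hdisj : Disjoint R E := by
      rw [Finset.disjoint_left]
      intro p hpR hpE
      have hv : p.2 = g p.1 := (hmemR p).mp hpR
      have := hE.1 hpE
      rw [hP, Finset.mem_filter] at this
      exact absurd this.2 (by rw [hv]; exact lt_irrefl _)
    exact Finset.union_sdiff_cancel_left hdisj

end Helpers

open Classical in
/-- The number of `T`-element subsets of an `n×n` grid whose every row is nonempty
equals `α(n,T)`, for `n ≤ T ≤ n²`. -/
theorem card_row_covering_subsets (n T : ℕ) (hn : 0 < n) (h1 : n ≤ T) (h2 : T ≤ n ^ 2) :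
    ((Finset.univ.filter (fun S : Finset (Fin n × Fin n) =>
        S.card = T ∧ ∀ r : Fin n, ∃ c : Fin n, (r, c) ∈ S)).card : ℤ)
      = alphaTV n T := by
  rw [main_count n T hn h1, alpha_eq n T hn]
  push_cast
  rfl
end

section
/- Lookahead simulation is not transitive for lookahead k ≥ 2: there exists a Büchi automaton (over alphabet {a,b}) with states p₀, q₀, r₀ such that p₀ is 2-lookahead simulated by q₀ and q₀ is 2-lookahead simulated by r₀, but p₀ is not k-lookahead simulated by r₀ for any finite k > 0. -/
namespace BA
variable {σ Q : Type}

/-- `X` is a `k`-lookahead simulation (without acceptance condition): from any pair in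
`X`, for every sequence of `k` consecutive Spoiler transitions, Duplicator can answer
with some `1 ≤ m ≤ k` matching transitions so that the pair of reached states is again
in `X`. -/
def IsLkSim (A : BA σ Q) (k : ℕ) (X : Q → Q → Prop) : Prop :=
  ∀ p q, X p q →
    ∀ (w : ℕ → σ) (ρ : ℕ → Q), ρ 0 = p → (∀ i < k, A.δ (ρ i) (w i) (ρ (i + 1))) →
      ∃ m, 1 ≤ m ∧ m ≤ k ∧
        ∃ τ : ℕ → Q, τ 0 = q ∧ (∀ i < m, A.δ (τ i) (w i) (τ (i + 1))) ∧ X (ρ m) (τ m)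

/-- `k`-lookahead simulation (the winning region of Duplicator in this safety game,
i.e. the largest `k`-lookahead simulation). -/
def lkSim (A : BA σ Q) (k : ℕ) (p q : Q) : Prop :=
  ∃ X, IsLkSim A k X ∧ X p q

end BA

def dlt : Fin 7 → Fin 2 → Fin 7 → Prop := fun p x t =>
  (p = 0 ∧ t = 0) ∨ (p = 1 ∧ (t = 2 ∨ t = 3)) ∨ (p = 2 ∧ x = 0 ∧ t = 1) ∨
  (p = 3 ∧ x = 1 ∧ t = 1) ∨ (p = 4 ∧ (t = 5 ∨ t = 6)) ∨
  (p = 5 ∧ x = 0 ∧ (t = 5 ∨ t = 6)) ∨ (p = 6 ∧ x = 1 ∧ (t = 5 ∨ t = 6))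

lemma fin2cases (x : Fin 2) : x = 0 ∨ x = 1 := by revert x; decide

lemma d0 {x t} (h : dlt 0 x t) : t = 0 := by simpa [dlt] using h
lemma d1 {x t} (h : dlt 1 x t) : t = 2 ∨ t = 3 := by simpa [dlt] using h
lemma d2 {x t} (h : dlt 2 x t) : x = 0 ∧ t = 1 := by simpa [dlt] using h
lemma d3 {x t} (h : dlt 3 x t) : x = 1 ∧ t = 1 := by simpa [dlt] using h
lemma d4 {x t} (h : dlt 4 x t) : t = 5 ∨ t = 6 := by simpa [dlt] using h
lemma d5 {x t} (h : dlt 5 x t) : x = 0 ∧ (t = 5 ∨ t = 6) := by simpa [dlt] using h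
lemma d6 {x t} (h : dlt 6 x t) : x = 1 ∧ (t = 5 ∨ t = 6) := by simpa [dlt] using h

/-- Lookahead simulation is not transitive for lookahead `k ≥ 2`: there exists a Büchi
automaton over a two-letter alphabet (with 7 states) containing states `p₀, q₀, r₀`
such that `p₀` is 2-lookahead simulated by `q₀`, and `q₀` is 2-lookahead simulated by
`r₀`, but `p₀` is not `k`-lookahead simulated by `r₀` for any finite `k > 0`. -/
theorem lkSim_not_transitive :
    ∃ (A : BA (Fin 2) (Fin 7)) (p₀ q₀ r₀ : Fin 7),
      A.lkSim 2 p₀ q₀ ∧ A.lkSim 2 q₀ r₀ ∧ ∀ k, 0 < k → ¬ A.lkSim k p₀ r₀ := by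
  refine ⟨⟨∅, ∅, dlt⟩, 0, 1, 4, ?_, ?_, ?_⟩
  · -- p₀ ⊑² q₀
    refine ⟨fun p q => p = 0 ∧ q = 1, ?_, rfl, rfl⟩
    rintro p q ⟨rfl, rfl⟩ w ρ hρ0 hρ
    have h1 : ρ 1 = 0 := by
      have := hρ 0 (by norm_num); rw [hρ0] at this; exact d0 this
    have h2 : ρ 2 = 0 := by
      have := hρ 1 (by norm_num); rw [h1] at this; exact d0 this
    refine ⟨2, one_le_two, le_refl _,
      fun i => if i = 0 then 1 else if i = 1 then (if w 1 = 0 then 2 else 3) else 1,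
      rfl, ?_, by simp [h2]⟩
    intro i hi
    interval_cases i <;> rcases fin2cases (w 1) with h | h <;> simp [BA.δ, dlt, h]
  · -- q₀ ⊑² r₀
    refine ⟨fun p q => (p = 1 ∧ q = 4) ∨ (p = 2 ∧ q = 5) ∨ (p = 3 ∧ q = 6), ?_,
      Or.inl ⟨rfl, rfl⟩⟩
    rintro p q (⟨rfl, rfl⟩ | ⟨rfl, rfl⟩ | ⟨rfl, rfl⟩) w ρ hρ0 hρ
    · have h1 : ρ 1 = 2 ∨ ρ 1 = 3 := by
        have := hρ 0 (by norm_num); rw [hρ0] at this; exact d1 this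
      refine ⟨1, le_refl _, one_le_two,
        fun i => if i = 0 then 4 else (if ρ 1 = 2 then 5 else 6), rfl, ?_, ?_⟩
      · intro i hi; interval_cases i; rcases h1 with h | h <;> simp [BA.δ, dlt, h]
      · rcases h1 with h | h <;> simp [h]
    · have h0 : w 0 = 0 ∧ ρ 1 = 1 := by
        have := hρ 0 (by norm_num); rw [hρ0] at this; exact d2 this
      have h2 : ρ 2 = 2 ∨ ρ 2 = 3 := by
        have := hρ 1 (by norm_num); rw [h0.2] at this; exact d1 this
      refine ⟨2, one_le_two, le_refl _,
        fun i => if i = 0 then 5 else if i = 1 then (if w 1 = 0 then 5 else 6)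
          else (if ρ 2 = 2 then 5 else 6), rfl, ?_, ?_⟩
      · intro i hi; interval_cases i <;>
          rcases fin2cases (w 1) with h | h <;>
          rcases h2 with h' | h' <;> simp [BA.δ, dlt, h, h', h0.1]
      · rcases h2 with h | h <;> simp [h]
    · have h0 : w 0 = 1 ∧ ρ 1 = 1 := by
        have := hρ 0 (by norm_num); rw [hρ0] at this; exact d3 this
      have h2 : ρ 2 = 2 ∨ ρ 2 = 3 := by
        have := hρ 1 (by norm_num); rw [h0.2] at this; exact d1 this
      refine ⟨2, one_le_two, le_refl _,
        fun i => if i = 0 then 6 else if i = 1 then (if w 1 = 0 then 5 else 6)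
          else (if ρ 2 = 2 then 5 else 6), rfl, ?_, ?_⟩
      · intro i hi; interval_cases i <;>
          rcases fin2cases (w 1) with h | h <;>
          rcases h2 with h' | h' <;> simp [BA.δ, dlt, h, h', h0.1]
      · rcases h2 with h | h <;> simp [h]
  · -- ¬ p₀ ⊑ᵏ r₀
    rintro k hk ⟨X, hX, h04⟩
    have no5 : ¬ X 0 5 := by
      intro h
      obtain ⟨m, hm1, -, τ, hτ0, hτδ, -⟩ :=
        hX 0 5 h (fun _ => 1) (fun _ => 0) rfl (fun i _ => Or.inl ⟨rfl, rfl⟩)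
      have := hτδ 0 (by omega)
      rw [hτ0] at this
      exact absurd (d5 this).1 (by decide)
    have no6 : ¬ X 0 6 := by
      intro h
      obtain ⟨m, hm1, -, τ, hτ0, hτδ, -⟩ :=
        hX 0 6 h (fun _ => 0) (fun _ => 0) rfl (fun i _ => Or.inl ⟨rfl, rfl⟩)
      have := hτδ 0 (by omega)
      rw [hτ0] at this
      exact absurd (d6 this).1 (by decide)
    obtain ⟨m, hm1, hmk, τ, hτ0, hτδ, hend⟩ :=
      hX 0 4 h04 (fun _ => 0) (fun _ => 0) rfl (fun i _ => Or.inl ⟨rfl, rfl⟩)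
    have key : ∀ i, i ≤ m → 1 ≤ i → τ i = 5 ∨ τ i = 6 := by
      intro i
      induction i with
      | zero => omega
      | succ n ih =>
        intro hle _
        rcases Nat.eq_zero_or_pos n with rfl | hn
        · have := hτδ 0 (by omega); rw [hτ0] at this; exact d4 this
        · have hδ := hτδ n (by omega)
          rcases ih (by omega) (by omega) with h | h
          · rw [h] at hδ; exact (d5 hδ).2
          · rw [h] at hδ; exact absurd (d6 hδ).1 (by decide)
    rcases key m (le_refl m) hm1 with h | h
    · rw [h] at hend; exact no5 hend
    · rw [h] at hend; exact no6 hend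
end
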